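/- arXiv:2301.10437 — 3 statements merged into one kernel-verified Lean document; each statement's English description precedes it below -/
import Mathlib

section
/- Let E be a weakly idempotent complete exact category with enough projectives P. The assignments T ↦ (⊥₁(Fac T), Fac T) and (C, D) ↦ C ∩ D are mutually inverse bijections between the collection of support τ-tilting subcategories of E and the collection of τ-cotorsion pairs (C, D) of E such that D is a torsion class. Moreover, these bijections restrict to mutually inverse bijections between the collection of tilting subcategories of E and the collection of cotorsion pairs (C, D) of E such that D is a torsion class. -/
open CategoryTheory CategoryTheory.Limits ZeroObject

namespace TauTilting

universe w v u

/-- A class of "conflations" (kernel–cokernel pairs) on an additive category,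
the datum underlying an exact structure in the sense of Quillen. -/
structure ConflationStruct (C : Type u) [Category.{v} C] [Preadditive C] where
  /-- `IsConflation f g` means that `X ↣ Y ↠ Z` given by `f, g` is a conflation. -/
  IsConflation : ∀ ⦃X Y Z : C⦄, (X ⟶ Y) → (Y ⟶ Z) → Prop

namespace ConflationStruct

variable {C : Type u} [Category.{v} C] [Preadditive C] (S : ConflationStruct C)

/-- A morphism is an inflation if it occurs as the first map of a conflation. -/
def IsInflation {X Y : C} (f : X ⟶ Y) : Prop :=
  ∃ (Z : C) (g : Y ⟶ Z), S.IsConflation f g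

/-- A morphism is a deflation if it occurs as the second map of a conflation. -/
def IsDeflation {Y Z : C} (g : Y ⟶ Z) : Prop :=
  ∃ (X : C) (f : X ⟶ Y), S.IsConflation f g

/-- Quillen's axioms for an exact structure: conflations are kernel-cokernel pairs,
the class of conflations is closed under isomorphisms, identities are inflations and
deflations, inflations and deflations are closed under composition, pushouts of
inflations along arbitrary morphisms exist and are inflations, and dually. -/
structure IsExactStructure : Prop where
  ker_coker : ∀ {X Y Z : C} {f : X ⟶ Y} {g : Y ⟶ Z}, S.IsConflation f g →
    ∃ w : f ≫ g = 0, Nonempty (IsLimit (KernelFork.ofι f w)) ∧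
      Nonempty (IsColimit (CokernelCofork.ofπ g w))
  iso_closed : ∀ {X X' Y Y' Z Z' : C} (eX : X' ≅ X) (eY : Y' ≅ Y) (eZ : Z' ≅ Z)
    {f : X ⟶ Y} {g : Y ⟶ Z}, S.IsConflation f g →
    S.IsConflation (eX.hom ≫ f ≫ eY.inv) (eY.hom ≫ g ≫ eZ.inv)
  id_inflation : ∀ X : C, S.IsInflation (𝟙 X)
  id_deflation : ∀ X : C, S.IsDeflation (𝟙 X)
  inflation_comp : ∀ {X Y Z : C} {f : X ⟶ Y} {g : Y ⟶ Z},
    S.IsInflation f → S.IsInflation g → S.IsInflation (f ≫ g)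
  deflation_comp : ∀ {X Y Z : C} {f : X ⟶ Y} {g : Y ⟶ Z},
    S.IsDeflation f → S.IsDeflation g → S.IsDeflation (f ≫ g)
  pushout_inflation : ∀ {X Y Z : C} (f : X ⟶ Y) (h : X ⟶ Z), S.IsInflation f →
    ∃ (W : C) (h' : Y ⟶ W) (f' : Z ⟶ W), IsPushout f h h' f' ∧ S.IsInflation f'
  pullback_deflation : ∀ {X Y Z : C} (g : X ⟶ Z) (h : Y ⟶ Z), S.IsDeflation g →
    ∃ (W : C) (h' : W ⟶ X) (g' : W ⟶ Y), IsPullback h' g' g h ∧ S.IsDeflation g'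

/-- An object `P` is projective relative to the exact structure: `Hom(P,-)` sends
conflations to short exact sequences, equivalently morphisms out of `P` lift along
deflations. -/
def IsProjObj (P : C) : Prop :=
  ∀ ⦃Y Z : C⦄ (g : Y ⟶ Z), S.IsDeflation g → ∀ u : P ⟶ Z, ∃ v : P ⟶ Y, v ≫ g = u

/-- The class of projective objects. -/
def projClass : Set C := {P | S.IsProjObj P}

/-- The exact category has enough projectives. -/
def HasEnoughProjectives : Prop :=
  ∀ X : C, ∃ (P : C) (p : P ⟶ X), S.IsProjObj P ∧ S.IsDeflation p

/-- `Fac T` : objects admitting a deflation from an object of `T`. -/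
def Fac (T : Set C) : Set C :=
  {X | ∃ (T' : C) (g : T' ⟶ X), T' ∈ T ∧ S.IsDeflation g}

/-- `Sub T` : objects admitting an inflation into an object of `T`. -/
def Sub (T : Set C) : Set C :=
  {X | ∃ (T' : C) (f : X ⟶ T'), T' ∈ T ∧ S.IsInflation f}

/-- `Ext¹(X, Y) = 0`, expressed by the splitting of all conflations `Y ↣ E ↠ X`. -/
def ext1Zero (X Y : C) : Prop :=
  ∀ (E : C) (f : Y ⟶ E) (g : E ⟶ X), S.IsConflation f g → ∃ s : X ⟶ E, s ≫ g = 𝟙 X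

/-- A morphism is admissible if it factors as a deflation followed by an inflation. -/
def IsAdmissible {X Y : C} (f : X ⟶ Y) : Prop :=
  ∃ (K : C) (d : X ⟶ K) (i : K ⟶ Y), S.IsDeflation d ∧ S.IsInflation i ∧ d ≫ i = f

end ConflationStruct

section Approx

variable {C : Type u} [Category.{v} C]

/-- `f : P ⟶ X` is a left `T`-approximation. -/
def LeftApprox (T : Set C) {P X : C} (f : P ⟶ X) : Prop :=
  X ∈ T ∧ ∀ (T' : C), T' ∈ T → ∀ u : P ⟶ T', ∃ v : X ⟶ T', f ≫ v = u

/-- `f : X ⟶ M` is a right `T`-approximation. -/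
def RightApprox (T : Set C) {X M : C} (f : X ⟶ M) : Prop :=
  X ∈ T ∧ ∀ (T' : C), T' ∈ T → ∀ u : T' ⟶ M, ∃ v : T' ⟶ X, v ≫ f = u

/-- A class of objects closed under direct summands. -/
def SummandClosed (T : Set C) : Prop :=
  ∀ {X Z : C}, Z ∈ T → ∀ (i : X ⟶ Z) (r : Z ⟶ X), i ≫ r = 𝟙 X → X ∈ T

end Approx

section Additive

variable {C : Type u} [Category.{v} C] [Preadditive C] [HasZeroObject C] [HasBinaryBiproducts C]

/-- An additively closed subcategory: closed under isomorphisms, finite direct sums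
and direct summands. -/
structure AdditivelyClosed (T : Set C) : Prop where
  mem_of_iso : ∀ {X Y : C}, (X ≅ Y) → X ∈ T → Y ∈ T
  zero_mem : (0 : C) ∈ T
  biprod_mem : ∀ {X Y : C}, X ∈ T → Y ∈ T → (X ⊞ Y) ∈ T
  summand_mem : SummandClosed T

/-- An object is indecomposable if it is nonzero and any biproduct decomposition is
trivial. -/
def IsIndecomposable (X : C) : Prop :=
  ¬ IsZero X ∧ ∀ (A B : C), (X ≅ A ⊞ B) → IsZero A ∨ IsZero B

/-- The cardinality of the set of isomorphism classes of indecomposable objects in `T`. -/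
noncomputable def numIndec (T : Set C) : Cardinal :=
  Cardinal.mk
    (Quot fun (X Y : {X : C // X ∈ T ∧ IsIndecomposable X}) => Nonempty ((X : C) ≅ (Y : C)))

end Additive

section AddOf

variable {C : Type u} [Category.{v} C] [Preadditive C] [HasFiniteBiproducts C]

/-- The additive closure of a class of objects : direct summands of finite direct
sums of its objects. -/
def addOf (X : Set C) : Set C :=
  {Y | ∃ (n : ℕ) (f : Fin n → C), (∀ j, f j ∈ X) ∧
    ∃ (i : Y ⟶ ⨁ f) (r : (⨁ f) ⟶ Y), i ≫ r = 𝟙 Y}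

/-- A Krull-Schmidt category: every object is a finite direct sum of objects with
local endomorphism ring. -/
def IsKrullSchmidt (C : Type u) [Category.{v} C] [Preadditive C] [HasFiniteBiproducts C] : Prop :=
  ∀ X : C, ∃ (n : ℕ) (f : Fin n → C), (∀ j, IsLocalRing (End (f j))) ∧ Nonempty (X ≅ ⨁ f)

end AddOf

namespace ConflationStruct

variable {C : Type u} [Category.{v} C] [Preadditive C] (S : ConflationStruct C)

section TauTilt

/-- The existence of an exact sequence `P → T⁰ ↠ T¹` with `T⁰, T¹ ∈ T` whose first
map is a left `T`-approximation; the exact sequence is encoded by the factorization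
of the first map as a deflation onto its image followed by an inflation which is a
kernel of the deflation `T⁰ ↠ T¹`. -/
def ApproxSeq (T : Set C) (P : C) : Prop :=
  ∃ (K T0 T1 : C) (d : P ⟶ K) (i : K ⟶ T0) (g : T0 ⟶ T1),
    T1 ∈ T ∧ S.IsDeflation d ∧ S.IsConflation i g ∧ LeftApprox T (d ≫ i)

variable [HasZeroObject C] [HasBinaryBiproducts C]

/-- A τ-rigid subcategory: additively closed with `Ext¹(T, Fac T) = 0`. -/
def IsTauRigid (T : Set C) : Prop :=
  AdditivelyClosed T ∧ ∀ T' ∈ T, ∀ X ∈ S.Fac T, S.ext1Zero T' X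

/-- A support τ-tilting subcategory. -/
def IsSupportTauTilting (T : Set C) : Prop :=
  S.IsTauRigid T ∧ ∀ P ∈ S.projClass, S.ApproxSeq T P

/-- Condition (A): every projective admits an admissible left `T`-approximation. -/
def CondA (T : Set C) : Prop :=
  ∀ P ∈ S.projClass, ∃ (T' : C) (f : P ⟶ T'), LeftApprox T f ∧ S.IsAdmissible f

end TauTilt

section Relative

/-- `g` is a deflation of the full exact subcategory supported on `D` (i.e. it is part
of a conflation all of whose terms belong to `D`; the source and target are recorded
separately where needed). -/
def DeflationIn (D : Set C) {Y Z : C} (g : Y ⟶ Z) : Prop :=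
  ∃ (X : C) (f : X ⟶ Y), X ∈ D ∧ S.IsConflation f g

/-- `P` is a projective object of the full exact subcategory supported on `D`. -/
def IsProjRel (D : Set C) (P : C) : Prop :=
  P ∈ D ∧ ∀ ⦃Y Z : C⦄ (g : Y ⟶ Z), Y ∈ D → Z ∈ D → S.DeflationIn D g →
    ∀ u : P ⟶ Z, ∃ v : P ⟶ Y, v ≫ g = u

/-- `Ext¹(X,Y) = 0` computed in the full exact subcategory supported on `D`. -/
def ext1ZeroRel (D : Set C) (X Y : C) : Prop :=
  ∀ (E : C) (f : Y ⟶ E) (g : E ⟶ X), E ∈ D → S.IsConflation f g →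
    ∃ s : X ⟶ E, s ≫ g = 𝟙 X

/-- `extSuccZeroRel S D n X Y` says `Ext^{n+1}(X, Y) = 0` in the full exact subcategory
supported on `D`, via dimension shifting along syzygies. -/
def extSuccZeroRel (D : Set C) : ℕ → C → C → Prop
  | 0 => fun X Y => S.ext1ZeroRel D X Y
  | (n+1) => fun X Y => ∀ (K P : C) (i : K ⟶ P) (p : P ⟶ X),
      K ∈ D → S.IsProjRel D P → S.IsConflation i p → extSuccZeroRel D n K Y

/-- `Ext^{n+1}(X,Y) = 0` in the ambient exact category. -/
def extSuccZero (n : ℕ) (X Y : C) : Prop := S.extSuccZeroRel Set.univ n X Y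

end Relative

section Tilting

variable [HasZeroObject C] [HasBinaryBiproducts C]

/-- A (1-)tilting subcategory of the ambient exact category (with enough projectives):
additively closed, self-orthogonal for all `Ext^i`, `i ≥ 1`, of projective dimension at
most one, and every projective admits a conflation `P ↣ T⁰ ↠ T¹` with `T⁰, T¹ ∈ T`. -/
def IsTilting (T : Set C) : Prop :=
  AdditivelyClosed T ∧
  (∀ T1 ∈ T, ∀ T2 ∈ T, ∀ n : ℕ, S.extSuccZero n T1 T2) ∧
  (∀ T' ∈ T, ∀ Y : C, S.extSuccZero 1 T' Y) ∧
  (∀ P ∈ S.projClass, ∃ (T0 T1 : C) (f : P ⟶ T0) (g : T0 ⟶ T1),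
    T0 ∈ T ∧ T1 ∈ T ∧ S.IsConflation f g)

/-- A tilting subcategory of the full exact subcategory supported on `D` (whose
projectives are the relative projectives). -/
def IsTiltingRel (D T : Set C) : Prop :=
  AdditivelyClosed T ∧ T ⊆ D ∧
  (∀ T1 ∈ T, ∀ T2 ∈ T, ∀ n : ℕ, S.extSuccZeroRel D n T1 T2) ∧
  (∀ T' ∈ T, ∀ Y ∈ D, S.extSuccZeroRel D 1 T' Y) ∧
  (∀ P : C, S.IsProjRel D P → ∃ (T0 T1 : C) (f : P ⟶ T0) (g : T0 ⟶ T1),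
    T0 ∈ T ∧ T1 ∈ T ∧ S.IsConflation f g)

end Tilting

section Pairs

/-- `⊥₁ D`. -/
def perp1 (D : Set C) : Set C := {X | ∀ Y ∈ D, S.ext1Zero X Y}

/-- `T^⊥₀`. -/
def perp0 (T : Set C) : Set C := {Y | ∀ T' ∈ T, ∀ f : T' ⟶ Y, f = 0}

/-- A torsion class: closed under factor objects and extensions. -/
def IsTorsionClass (D : Set C) : Prop :=
  (∀ {X Y : C} (g : X ⟶ Y), X ∈ D → S.IsDeflation g → Y ∈ D) ∧
  (∀ {X Y Z : C} {f : X ⟶ Y} {g : Y ⟶ Z}, S.IsConflation f g → X ∈ D → Z ∈ D → Y ∈ D)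

/-- A torsion pair `(D, F)`. -/
def IsTorsionPair (D F : Set C) : Prop :=
  (∀ X ∈ D, ∀ Y ∈ F, ∀ f : X ⟶ Y, f = 0) ∧
  (∀ X : C, ∃ (D0 F0 : C) (i : D0 ⟶ X) (p : X ⟶ F0), D0 ∈ D ∧ F0 ∈ F ∧ S.IsConflation i p)

/-- A τ-cotorsion pair `(Cc, D)`. -/
def IsTauCotorsionPair (Cc D : Set C) : Prop :=
  Cc = S.perp1 D ∧
  ∀ P ∈ S.projClass, ∃ (K D0 C0 : C) (d : P ⟶ K) (i : K ⟶ D0) (g : D0 ⟶ C0),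
    D0 ∈ Cc ∧ D0 ∈ D ∧ C0 ∈ Cc ∧ S.IsDeflation d ∧ S.IsConflation i g ∧
    LeftApprox D (d ≫ i)

/-- A (complete) cotorsion pair `(Cc, D)`. -/
def IsCotorsionPair (Cc D : Set C) : Prop :=
  SummandClosed Cc ∧ SummandClosed D ∧
  (∀ X ∈ Cc, ∀ Y ∈ D, S.ext1Zero X Y) ∧
  (∀ X : C, ∃ (D0 C0 : C) (f : D0 ⟶ C0) (g : C0 ⟶ X),
    D0 ∈ D ∧ C0 ∈ Cc ∧ S.IsConflation f g) ∧
  (∀ X : C, ∃ (D1 C1 : C) (f : X ⟶ D1) (g : D1 ⟶ C1),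
    D1 ∈ D ∧ C1 ∈ Cc ∧ S.IsConflation f g)

/-- Admissibly contravariantly finite subcategory. -/
def IsACF (T : Set C) : Prop :=
  ∀ X : C, ∃ (T' : C) (f : T' ⟶ X), RightApprox T f ∧ S.IsAdmissible f

end Pairs

end ConflationStruct

/-- A weakly idempotent complete additive category: every section has a cokernel. -/
def WeaklyIdempotentComplete (C : Type u) [Category.{v} C] [Preadditive C] : Prop :=
  ∀ {X Y : C} (s : X ⟶ Y), (∃ r : Y ⟶ X, s ≫ r = 𝟙 X) → HasCokernel s


namespace ConflationStruct

variable {C : Type u} [Category.{v} C] [Preadditive C] (S : ConflationStruct C)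

section ET

/-- Membership in the ideal `I` of the category of projectives: morphisms `f`
between projectives with `Hom(f, T') = 0` for all `T' ∈ T`. -/
def memIdeal (T : Set C) {Q Q' : C} (f : Q ⟶ Q') : Prop :=
  S.IsProjObj Q ∧ S.IsProjObj Q' ∧ ∀ T' ∈ T, ∀ g : Q' ⟶ T', f ≫ g = 0

/-- `A_T`: the objects killed by the ideal `I`. -/
def AT (T : Set C) : Set C :=
  {X | ∀ ⦃Q Q' : C⦄ (f : Q ⟶ Q'), S.memIdeal T f → ∀ h : Q' ⟶ X, f ≫ h = 0}

/-- The conflation structure induced on a full subcategory: conflations of the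
ambient category all of whose terms lie in the subcategory. -/
def structOn (D : Set C) : ConflationStruct (ObjectProperty.FullSubcategory (fun X : C => X ∈ D)) :=
  ⟨fun _ _ _ f g => S.IsConflation f.hom g.hom⟩

variable [HasFiniteBiproducts C]

/-- `P_T`: additive closure of the images of admissible left `T`-approximations of
projectives. -/
def PTset (T : Set C) : Set C :=
  addOf {K | ∃ (Q T0 : C) (d : Q ⟶ K) (i : K ⟶ T0),
    S.IsProjObj Q ∧ S.IsDeflation d ∧ S.IsInflation i ∧ LeftApprox T (d ≫ i)}

end ET

section NTilting

/-- `T^⊥ = {Y | Ext^i(T', Y) = 0  for all i ≥ 1, T' ∈ T}`. -/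
def rperp (T : Set C) : Set C :=
  {Y | ∀ T' ∈ T, ∀ n : ℕ, S.extSuccZero n T' Y}

/-- `Cores S D n X` : `X` admits an exact sequence
`X ↣ Y₀ → ⋯ → Y_{n-1} ↠ Y_n` with all `Yᵢ ∈ D`. -/
def Cores (D : Set C) : ℕ → C → Prop
  | 0 => fun X => X ∈ D
  | (n+1) => fun X => ∃ (Y K : C) (i : X ⟶ Y) (p : Y ⟶ K),
      Y ∈ D ∧ S.IsConflation i p ∧ Cores D n K

/-- An `n`-tilting subcategory in the sense of Sauter: `T^⊥` has enough projectives
given by `T`, and every object has a `T^⊥`-coresolution of length `n`. -/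
def IsNTilting (T : Set C) (n : ℕ) : Prop :=
  T ⊆ S.rperp T ∧
  (∀ T' ∈ T, ∀ Y ∈ S.rperp T, S.ext1Zero T' Y) ∧
  (∀ Y ∈ S.rperp T, ∃ (K T' : C) (i : K ⟶ T') (p : T' ⟶ Y),
    T' ∈ T ∧ K ∈ S.rperp T ∧ S.IsConflation i p) ∧
  (∀ X : C, S.Cores (S.rperp T) n X)

/-- `P^{<∞}`: objects of finite projective dimension. -/
def Pfin : Set C := {X | ∃ n : ℕ, ∀ Y : C, S.extSuccZero n X Y}

end NTilting

section TauObj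

variable [HasZeroObject C] [HasBinaryBiproducts C]

/-- Variant of `ApproxSeq` where the left approximation is required to be nonzero. -/
def ApproxSeqNonzero (T : Set C) (P : C) : Prop :=
  ∃ (K T0 T1 : C) (d : P ⟶ K) (i : K ⟶ T0) (g : T0 ⟶ T1),
    T1 ∈ T ∧ S.IsDeflation d ∧ S.IsConflation i g ∧ LeftApprox T (d ≫ i) ∧ d ≫ i ≠ 0

/-- A τ-tilting subcategory: support τ-tilting such that every nonzero projective
admits a nonzero such approximation sequence. -/
def IsTauTiltingSubcat (T : Set C) : Prop :=
  S.IsSupportTauTilting T ∧ ∀ P ∈ S.projClass, ¬ IsZero P → S.ApproxSeqNonzero T P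

end TauObj

end ConflationStruct

section K0

variable {C : Type u} [Category.{v} C] [Preadditive C]

/-- Relations for the Grothendieck group of an exact subcategory: conflation
relations together with isomorphism relations. -/
def K0ExRels (S : ConflationStruct C) (D : Set C) :
    Set (FreeAbelianGroup {X : C // X ∈ D}) :=
  {x | (∃ (A B E : {X : C // X ∈ D}) (f : (A : C) ⟶ (B : C)) (g : (B : C) ⟶ (E : C)),
          S.IsConflation f g ∧
          x = FreeAbelianGroup.of B - FreeAbelianGroup.of A - FreeAbelianGroup.of E) ∨
       (∃ (A B : {X : C // X ∈ D}), Nonempty ((A : C) ≅ (B : C)) ∧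
          x = FreeAbelianGroup.of A - FreeAbelianGroup.of B)}

/-- The Grothendieck group of the full exact subcategory supported on `D`. -/
def K0Ex (S : ConflationStruct C) (D : Set C) :=
  FreeAbelianGroup {X : C // X ∈ D} ⧸ AddSubgroup.closure (K0ExRels S D)

noncomputable instance (S : ConflationStruct C) (D : Set C) : AddCommGroup (K0Ex S D) :=
  QuotientAddGroup.Quotient.addCommGroup _

variable [HasBinaryBiproducts C]

/-- Relations for the split Grothendieck group of an additive subcategory. -/
def K0SplitRels (T : Set C) : Set (FreeAbelianGroup {X : C // X ∈ T}) :=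
  {x | (∃ (A B E : {X : C // X ∈ T}), Nonempty ((E : C) ≅ (A : C) ⊞ (B : C)) ∧
          x = FreeAbelianGroup.of E - FreeAbelianGroup.of A - FreeAbelianGroup.of B) ∨
       (∃ (A B : {X : C // X ∈ T}), Nonempty ((A : C) ≅ (B : C)) ∧
          x = FreeAbelianGroup.of A - FreeAbelianGroup.of B)}

/-- The split Grothendieck group of the additive subcategory supported on `T`. -/
def K0Split (T : Set C) :=
  FreeAbelianGroup {X : C // X ∈ T} ⧸ AddSubgroup.closure (K0SplitRels T)

noncomputable instance (T : Set C) : AddCommGroup (K0Split T) :=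
  QuotientAddGroup.Quotient.addCommGroup _

end K0

end TauTilting


namespace TauTilting
namespace ConflationStruct

open CategoryTheory.Limits

set_option linter.unusedSectionVars false
set_option maxHeartbeats 1000000

section Machinery

universe w2 v2 u2

variable {C : Type u2} [Category.{v2} C] [Preadditive C] {S : ConflationStruct C}

section Basic

theorem conf_w (hS : S.IsExactStructure) {X Y Z : C} {f : X ⟶ Y} {g : Y ⟶ Z} (h : S.IsConflation f g) : f ≫ g = 0 :=
  (hS.ker_coker h).choose

theorem conf_lift (hS : S.IsExactStructure) {X Y Z : C} {f : X ⟶ Y} {g : Y ⟶ Z} (h : S.IsConflation f g)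
    {W : C} {t : W ⟶ Y} (ht : t ≫ g = 0) : ∃ u : W ⟶ X, u ≫ f = t := by
  obtain ⟨w, ⟨hk⟩, -⟩ := hS.ker_coker h
  obtain ⟨l, hl⟩ := KernelFork.IsLimit.lift' hk t ht
  exact ⟨l, by simpa using hl⟩

theorem conf_mono (hS : S.IsExactStructure) {X Y Z : C} {f : X ⟶ Y} {g : Y ⟶ Z} (h : S.IsConflation f g)
    {W : C} {u v : W ⟶ X} (huv : u ≫ f = v ≫ f) : u = v := by
  obtain ⟨w, ⟨hk⟩, -⟩ := hS.ker_coker h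
  exact Fork.IsLimit.hom_ext hk (by simpa using huv)

theorem conf_desc (hS : S.IsExactStructure) {X Y Z : C} {f : X ⟶ Y} {g : Y ⟶ Z} (h : S.IsConflation f g)
    {W : C} {t : Y ⟶ W} (ht : f ≫ t = 0) : ∃ u : Z ⟶ W, g ≫ u = t := by
  obtain ⟨w, -, ⟨hc⟩⟩ := hS.ker_coker h
  obtain ⟨l, hl⟩ := CokernelCofork.IsColimit.desc' hc t ht
  exact ⟨l, by simpa using hl⟩

theorem conf_epi (hS : S.IsExactStructure) {X Y Z : C} {f : X ⟶ Y} {g : Y ⟶ Z} (h : S.IsConflation f g)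
    {W : C} {u v : Z ⟶ W} (huv : g ≫ u = g ≫ v) : u = v := by
  obtain ⟨w, -, ⟨hc⟩⟩ := hS.ker_coker h
  exact Cofork.IsColimit.hom_ext hc (by simpa using huv)

theorem conf_iso_left (hS : S.IsExactStructure) {X X' Y Z : C} (e : X' ≅ X) {f : X ⟶ Y} {g : Y ⟶ Z}
    (h : S.IsConflation f g) : S.IsConflation (e.hom ≫ f) g := by
  simpa using hS.iso_closed e (Iso.refl Y) (Iso.refl Z) h

theorem conf_iso_mid (hS : S.IsExactStructure) {X Y Y' Z : C} (e : Y' ≅ Y) {f : X ⟶ Y} {g : Y ⟶ Z}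
    (h : S.IsConflation f g) : S.IsConflation (f ≫ e.inv) (e.hom ≫ g) := by
  simpa using hS.iso_closed (Iso.refl X) e (Iso.refl Z) h

theorem conf_iso_right (hS : S.IsExactStructure) {X Y Z Z' : C} (e : Z' ≅ Z) {f : X ⟶ Y} {g : Y ⟶ Z}
    (h : S.IsConflation f g) : S.IsConflation f (g ≫ e.inv) := by
  simpa using hS.iso_closed (Iso.refl X) (Iso.refl Y) e h

theorem defl_cancel (hS : S.IsExactStructure) {Y Z : C} {g : Y ⟶ Z} (hg : S.IsDeflation g)
    {W : C} {u v : Z ⟶ W} (huv : g ≫ u = g ≫ v) : u = v := by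
  obtain ⟨X, f, h⟩ := hg; exact conf_epi hS h huv

theorem infl_cancel (hS : S.IsExactStructure) {X Y : C} {f : X ⟶ Y} (hf : S.IsInflation f)
    {W : C} {u v : W ⟶ X} (huv : u ≫ f = v ≫ f) : u = v := by
  obtain ⟨Z, g, h⟩ := hf; exact conf_mono hS h huv

theorem defl_pre_iso (hS : S.IsExactStructure) {W Y Z : C} {g : Y ⟶ Z} (hg : S.IsDeflation g) (e : W ≅ Y) :
    S.IsDeflation (e.hom ≫ g) := by
  obtain ⟨X, f, h⟩ := hg
  exact ⟨X, f ≫ e.inv, conf_iso_mid hS e h⟩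

theorem defl_post_iso (hS : S.IsExactStructure) {Y Z W : C} {g : Y ⟶ Z} (hg : S.IsDeflation g) (e : Z ≅ W) :
    S.IsDeflation (g ≫ e.hom) := by
  obtain ⟨X, f, h⟩ := hg
  exact ⟨X, f, by simpa using conf_iso_right hS e.symm h⟩

theorem infl_pre_iso (hS : S.IsExactStructure) {W X Y : C} {f : X ⟶ Y} (hf : S.IsInflation f) (e : W ≅ X) :
    S.IsInflation (e.hom ≫ f) := by
  obtain ⟨Z, g, h⟩ := hf
  exact ⟨Z, g, conf_iso_left hS e h⟩

theorem infl_post_iso (hS : S.IsExactStructure) {X Y W : C} {f : X ⟶ Y} (hf : S.IsInflation f) (e : Y ≅ W) :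
    S.IsInflation (f ≫ e.hom) := by
  obtain ⟨Z, g, h⟩ := hf
  exact ⟨Z, e.inv ≫ g, by simpa using conf_iso_mid hS e.symm h⟩

/-- Replace the kernel of a conflation by any other kernel. -/
theorem conf_of_ker (hS : S.IsExactStructure) {X Y Z : C} {g : Y ⟶ Z} (hg : S.IsDeflation g) {F : X ⟶ Y}
    (hw : F ≫ g = 0)
    (hmono : ∀ {W : C} {u v : W ⟶ X}, u ≫ F = v ≫ F → u = v)
    (hlift : ∀ {W : C} (t : W ⟶ Y), t ≫ g = 0 → ∃ z : W ⟶ X, z ≫ F = t) :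
    S.IsConflation F g := by
  obtain ⟨L, k, hk⟩ := hg
  obtain ⟨e, he⟩ := hlift k (conf_w hS hk)
  obtain ⟨n, hn⟩ := conf_lift hS hk hw
  have hne : n ≫ e = 𝟙 X := hmono (by rw [Category.assoc, he, hn, Category.id_comp])
  have hen : e ≫ n = 𝟙 L := conf_mono hS hk (by rw [Category.assoc, hn, he, Category.id_comp])
  have := conf_iso_left hS (⟨n, e, hne, hen⟩ : X ≅ L) hk
  simpa [hn] using this

/-- Replace the cokernel of a conflation by any other cokernel. -/
theorem conf_of_coker (hS : S.IsExactStructure) {X Y Z : C} {f : X ⟶ Y} (hf : S.IsInflation f) {G : Y ⟶ Z}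
    (hw : f ≫ G = 0)
    (hepi : ∀ {W : C} {u v : Z ⟶ W}, G ≫ u = G ≫ v → u = v)
    (hdesc : ∀ {W : C} (t : Y ⟶ W), f ≫ t = 0 → ∃ z : Z ⟶ W, G ≫ z = t) :
    S.IsConflation f G := by
  obtain ⟨Q, c, hc⟩ := hf
  obtain ⟨z, hz⟩ := hdesc c (conf_w hS hc)
  obtain ⟨z', hz'⟩ := conf_desc hS hc hw
  have h1 : z ≫ z' = 𝟙 Z := hepi (by rw [← Category.assoc, hz, hz', Category.comp_id])
  have h2 : z' ≫ z = 𝟙 Q := conf_epi hS hc (by rw [← Category.assoc, hz', hz, Category.comp_id])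
  have := conf_iso_right hS (⟨z, z', h1, h2⟩ : Z ≅ Q) hc
  simpa [show (⟨z, z', h1, h2⟩ : Z ≅ Q).inv = z' from rfl, hz'] using this

end Basic

section ZeroBiprod

theorem iso_deflation (hS : S.IsExactStructure) {Y Z : C} (e : Y ≅ Z) : S.IsDeflation e.hom := by
  simpa using defl_pre_iso hS (hS.id_deflation Z) e

theorem iso_inflation (hS : S.IsExactStructure) {Y Z : C} (e : Y ≅ Z) : S.IsInflation e.hom := by
  simpa using infl_post_iso hS (hS.id_inflation Y) e

/-- Every object admits a deflation onto a zero object. -/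
theorem defl_to_zero (hS : S.IsExactStructure) (X : C) :
    ∃ (Z : C) (g : X ⟶ Z), IsZero Z ∧ S.IsConflation (𝟙 X) g ∧ S.IsDeflation g := by
  obtain ⟨Z, g, h⟩ := hS.id_inflation X
  have hg0 : g = 0 := by simpa using conf_w hS h
  have hz : IsZero Z := by
    rw [IsZero.iff_id_eq_zero]
    exact conf_epi hS h (by simp [hg0])
  exact ⟨Z, g, hz, h, ⟨X, 𝟙 X, h⟩⟩

variable [HasZeroObject C]

theorem conf_zero_id (hS : S.IsExactStructure) (Y : C) : S.IsConflation (0 : (0 : C) ⟶ Y) (𝟙 Y) := by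
  obtain ⟨X₀, f₀, h₀⟩ := hS.id_deflation Y
  have hf0 : f₀ = 0 := by simpa using conf_w hS h₀
  have hz : IsZero X₀ := by
    rw [IsZero.iff_id_eq_zero]
    exact conf_mono hS h₀ (by simp [hf0])
  have := conf_iso_left hS hz.isoZero.symm h₀
  simpa [hf0] using this

variable [HasBinaryBiproducts C]

theorem conf_inl_snd (hS : S.IsExactStructure) (X Y : C) :
    S.IsConflation (biprod.inl : X ⟶ X ⊞ Y) (biprod.snd : X ⊞ Y ⟶ Y) := by
  obtain ⟨W, h', f', hpo, hf'⟩ :=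
    hS.pushout_inflation (0 : (0 : C) ⟶ Y) (0 : (0 : C) ⟶ X)
      ⟨Y, 𝟙 Y, conf_zero_id hS Y⟩
  have hcomm : (0 : (0 : C) ⟶ Y) ≫ (biprod.inr : Y ⟶ X ⊞ Y) =
      (0 : (0 : C) ⟶ X) ≫ (biprod.inl : X ⟶ X ⊞ Y) := by simp
  set u : W ⟶ X ⊞ Y := hpo.desc biprod.inr biprod.inl hcomm with hu
  have hu1 : h' ≫ u = biprod.inr := hpo.inl_desc _ _ _
  have hu2 : f' ≫ u = biprod.inl := hpo.inr_desc _ _ _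
  set v : X ⊞ Y ⟶ W := biprod.desc f' h' with hv
  have huv : u ≫ v = 𝟙 W := by
    apply hpo.hom_ext
    · rw [← Category.assoc, hu1]; simp [hv]
    · rw [← Category.assoc, hu2]; simp [hv]
  have hvu : v ≫ u = 𝟙 _ := by
    apply biprod.hom_ext' <;> simp [hv, hu1, hu2]
  have hinfl : S.IsInflation (biprod.inl : X ⟶ X ⊞ Y) := by
    have := infl_post_iso hS hf' (⟨u, v, huv, hvu⟩ : W ≅ X ⊞ Y)
    simpa [hu2] using this
  refine conf_of_coker hS hinfl (by simp) ?_ ?_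
  · intro W' a b hab
    calc a = biprod.inr ≫ (biprod.snd : X ⊞ Y ⟶ Y) ≫ a := by simp
      _ = biprod.inr ≫ (biprod.snd : X ⊞ Y ⟶ Y) ≫ b := by rw [hab]
      _ = b := by simp
  · intro W' t ht
    refine ⟨biprod.inr ≫ t, ?_⟩
    have htotal := biprod.total (X := X) (Y := Y)
    have h1 : (biprod.fst ≫ biprod.inl + biprod.snd ≫ biprod.inr) ≫ t = t := by
      rw [htotal]; simp
    rw [Preadditive.add_comp, Category.assoc, Category.assoc, ht, comp_zero, zero_add] at h1
    exact h1

theorem conf_inr_fst (hS : S.IsExactStructure) (X Y : C) :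
    S.IsConflation (biprod.inr : Y ⟶ X ⊞ Y) (biprod.fst : X ⊞ Y ⟶ X) := by
  have h := conf_iso_mid hS (biprod.braiding X Y) (conf_inl_snd hS Y X)
  have e1 : (biprod.inl : Y ⟶ Y ⊞ X) ≫ (biprod.braiding X Y).inv = biprod.inr := by
    apply biprod.hom_ext <;> simp [biprod.braiding]
  have e2 : (biprod.braiding X Y).hom ≫ (biprod.snd : Y ⊞ X ⟶ X) = biprod.fst := by
    simp [biprod.braiding]
  rwa [e1, e2] at h

theorem conf_split (hS : S.IsExactStructure) {X Y E : C}
    {f : Y ⟶ E} {g : E ⟶ X} (h : S.IsConflation f g) {s : X ⟶ E} (hs : s ≫ g = 𝟙 X) :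
    ∃ r : E ⟶ Y, f ≫ r = 𝟙 Y ∧ s ≫ r = 0 ∧ r ≫ f + g ≫ s = 𝟙 E := by
  have hw : (𝟙 E - g ≫ s) ≫ g = 0 := by
    simp [Preadditive.sub_comp, Category.assoc, hs]
  obtain ⟨r, hr⟩ := conf_lift hS h hw
  have hfg := conf_w hS h
  refine ⟨r, ?_, ?_, by rw [hr]; abel⟩
  · apply conf_mono hS h
    rw [Category.assoc, hr]
    simp [Preadditive.comp_sub, ← Category.assoc, hfg]
  · apply conf_mono hS h
    rw [Category.assoc, hr]
    simp [Preadditive.comp_sub, ← Category.assoc, hs]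

theorem conf_split_iso (hS : S.IsExactStructure) {X Y E : C}
    {f : Y ⟶ E} {g : E ⟶ X} (h : S.IsConflation f g) {s : X ⟶ E} (hs : s ≫ g = 𝟙 X) :
    ∃ e : E ≅ Y ⊞ X, e.inv = biprod.desc f s ∧ e.hom ≫ biprod.snd = g ∧ f ≫ e.hom = biprod.inl := by
  obtain ⟨r, h1, h2, h3⟩ := conf_split hS h hs
  have hfg := conf_w hS h
  refine ⟨⟨biprod.lift r g, biprod.desc f s, ?_, ?_⟩, rfl, by simp, ?_⟩
  · rw [biprod.lift_desc, h3]
  · apply biprod.hom_ext' <;> apply biprod.hom_ext <;> simp [h1, h2, hs, hfg]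
  · apply biprod.hom_ext <;> simp [h1, hfg]

end ZeroBiprod

section WIC

theorem wic_split (hW : WeaklyIdempotentComplete C) {A B : C} {σ : A ⟶ B} {ρ : B ⟶ A} (hσρ : σ ≫ ρ = 𝟙 A) :
    ∃ (Q : C) (π : B ⟶ Q) (ι : Q ⟶ B),
      σ ≫ π = 0 ∧ ι ≫ π = 𝟙 Q ∧ ι ≫ ρ = 0 ∧ ρ ≫ σ + π ≫ ι = 𝟙 B ∧
      (∀ {W : C} {u v : Q ⟶ W}, π ≫ u = π ≫ v → u = v) := by
  haveI := hW σ ⟨ρ, hσρ⟩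
  set π := cokernel.π σ with hπ
  have hcond : σ ≫ π = 0 := cokernel.condition σ
  have hdesc : σ ≫ (𝟙 B - ρ ≫ σ) = 0 := by
    simp [Preadditive.comp_sub, ← Category.assoc, hσρ]
  set ι := cokernel.desc σ (𝟙 B - ρ ≫ σ) hdesc with hι
  have hπι : π ≫ ι = 𝟙 B - ρ ≫ σ := cokernel.π_desc _ _ _
  have hιπ : ι ≫ π = 𝟙 _ := by
    rw [← cancel_epi π, ← Category.assoc, hπι]
    simp [Preadditive.sub_comp, Category.assoc, hcond]
  have hιρ : ι ≫ ρ = 0 := by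
    rw [← cancel_epi π, ← Category.assoc, hπι]
    simp [Preadditive.sub_comp, Category.assoc, hσρ]
  exact ⟨_, π, ι, hcond, hιπ, hιρ, by rw [hπι]; abel,
    fun {W u v} huv => by rwa [cancel_epi π] at huv⟩

variable [HasZeroObject C] [HasBinaryBiproducts C]

theorem retraction_deflation (hS : S.IsExactStructure) (hW : WeaklyIdempotentComplete C) {A B : C} {σ : A ⟶ B} {ρ : B ⟶ A} (hσρ : σ ≫ ρ = 𝟙 A) :
    S.IsDeflation ρ := by
  obtain ⟨Q, π, ι, hcond, hιπ, hιρ, htot, hepi⟩ := wic_split hW hσρ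
  have hhi : biprod.lift ρ π ≫ biprod.desc σ ι = 𝟙 B := by rw [biprod.lift_desc, htot]
  have hih : biprod.desc σ ι ≫ biprod.lift ρ π = 𝟙 _ := by
    apply biprod.hom_ext' <;> apply biprod.hom_ext <;> simp [hσρ, hcond, hιρ, hιπ]
  have hfst : S.IsDeflation (biprod.fst : A ⊞ Q ⟶ A) := ⟨_, _, conf_inr_fst hS A Q⟩
  have := defl_pre_iso hS hfst (⟨biprod.lift ρ π, biprod.desc σ ι, hhi, hih⟩ : B ≅ A ⊞ Q)
  simpa using this

theorem section_inflation (hS : S.IsExactStructure) (hW : WeaklyIdempotentComplete C) {A B : C} {σ : A ⟶ B} {ρ : B ⟶ A} (hσρ : σ ≫ ρ = 𝟙 A) :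
    S.IsInflation σ := by
  obtain ⟨Q, π, ι, hcond, hιπ, hιρ, htot, hepi⟩ := wic_split hW hσρ
  have hhi : biprod.lift ρ π ≫ biprod.desc σ ι = 𝟙 B := by rw [biprod.lift_desc, htot]
  have hih : biprod.desc σ ι ≫ biprod.lift ρ π = 𝟙 _ := by
    apply biprod.hom_ext' <;> apply biprod.hom_ext <;> simp [hσρ, hcond, hιρ, hιπ]
  have hinl : S.IsInflation (biprod.inl : A ⟶ A ⊞ Q) := ⟨_, _, conf_inl_snd hS A Q⟩
  have := infl_post_iso hS hinl (⟨biprod.lift ρ π, biprod.desc σ ι, hhi, hih⟩ : B ≅ A ⊞ Q).symm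
  simpa using this

end WIC

section PullPush

theorem defl_of_isPullback (hS : S.IsExactStructure) {X Y Z W : C} {g : X ⟶ Z} {h : Y ⟶ Z}
    {h' : W ⟶ X} {g' : W ⟶ Y} (hpb : IsPullback h' g' g h) (hg : S.IsDeflation g) :
    S.IsDeflation g' := by
  obtain ⟨W₂, h₂, g₂, hpb₂, hg₂⟩ := hS.pullback_deflation g h hg
  have l1 : hpb₂.lift h' g' hpb.w ≫ h₂ = h' := hpb₂.lift_fst _ _ _
  have l2 : hpb₂.lift h' g' hpb.w ≫ g₂ = g' := hpb₂.lift_snd _ _ _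
  have l3 : hpb.lift h₂ g₂ hpb₂.w ≫ h' = h₂ := hpb.lift_fst _ _ _
  have l4 : hpb.lift h₂ g₂ hpb₂.w ≫ g' = g₂ := hpb.lift_snd _ _ _
  have h1 : hpb₂.lift h' g' hpb.w ≫ hpb.lift h₂ g₂ hpb₂.w = 𝟙 W := by
    apply hpb.hom_ext <;> simp [l1, l2, l3, l4]
  have h2 : hpb.lift h₂ g₂ hpb₂.w ≫ hpb₂.lift h' g' hpb.w = 𝟙 W₂ := by
    apply hpb₂.hom_ext <;> simp [l1, l2, l3, l4]
  have := defl_pre_iso hS hg₂ (⟨hpb₂.lift h' g' hpb.w, hpb.lift h₂ g₂ hpb₂.w, h1, h2⟩ : W ≅ W₂)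
  simpa [l2] using this

theorem infl_of_isPushout (hS : S.IsExactStructure) {X Y Z W : C} {f : X ⟶ Y} {h : X ⟶ Z}
    {h' : Y ⟶ W} {f' : Z ⟶ W} (hpo : IsPushout f h h' f') (hf : S.IsInflation f) :
    S.IsInflation f' := by
  obtain ⟨W₂, h₂, f₂, hpo₂, hf₂⟩ := hS.pushout_inflation f h hf
  have l1 : h' ≫ hpo.desc h₂ f₂ hpo₂.w = h₂ := hpo.inl_desc _ _ _
  have l2 : f' ≫ hpo.desc h₂ f₂ hpo₂.w = f₂ := hpo.inr_desc _ _ _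
  have l3 : h₂ ≫ hpo₂.desc h' f' hpo.w = h' := hpo₂.inl_desc _ _ _
  have l4 : f₂ ≫ hpo₂.desc h' f' hpo.w = f' := hpo₂.inr_desc _ _ _
  have h1 : hpo.desc h₂ f₂ hpo₂.w ≫ hpo₂.desc h' f' hpo.w = 𝟙 W := by
    apply hpo.hom_ext <;> simp [← Category.assoc, l1, l2, l3, l4]
  have h2 : hpo₂.desc h' f' hpo.w ≫ hpo.desc h₂ f₂ hpo₂.w = 𝟙 W₂ := by
    apply hpo₂.hom_ext <;> simp [← Category.assoc, l1, l2, l3, l4]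
  have := infl_post_iso hS hf₂ (⟨hpo₂.desc h' f' hpo.w, hpo.desc h₂ f₂ hpo₂.w, h2, h1⟩ : W₂ ≅ W)
  simpa [l4] using this

/-- Pushout of a conflation along an arbitrary morphism. -/
theorem pushout_conf (hS : S.IsExactStructure) {X Y Z : C} {f : X ⟶ Y} {g : Y ⟶ Z}
    (hfg : S.IsConflation f g) {W : C} (h : X ⟶ W) :
    ∃ (Q : C) (h' : Y ⟶ Q) (f' : W ⟶ Q) (w : Q ⟶ Z),
      IsPushout f h h' f' ∧ S.IsConflation f' w ∧ h' ≫ w = g := by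
  obtain ⟨Q, h', f', hpo, hf'⟩ := hS.pushout_inflation f h ⟨Z, g, hfg⟩
  have hcomm : f ≫ g = h ≫ (0 : W ⟶ Z) := by rw [conf_w hS hfg, comp_zero]
  have hw1 : h' ≫ hpo.desc g 0 hcomm = g := hpo.inl_desc _ _ _
  have hw2 : f' ≫ hpo.desc g 0 hcomm = 0 := hpo.inr_desc _ _ _
  refine ⟨Q, h', f', hpo.desc g 0 hcomm, hpo, conf_of_coker hS hf' hw2 ?_ ?_, hw1⟩
  · intro V u v huv
    refine conf_epi hS hfg ?_
    rw [← hw1, Category.assoc, Category.assoc, huv]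
  · intro V t ht
    have h0 : f ≫ h' ≫ t = 0 := by rw [← Category.assoc, hpo.w, Category.assoc, ht, comp_zero]
    obtain ⟨z, hz⟩ := conf_desc hS hfg h0
    refine ⟨z, hpo.hom_ext ?_ ?_⟩
    · rw [← Category.assoc, hw1, hz]
    · rw [← Category.assoc, hw2, zero_comp, ht]

/-- Pullback of a deflation preserves the kernel. -/
theorem pullback_conf_ker (hS : S.IsExactStructure) {X Y Z : C} {f : X ⟶ Y} {g : Y ⟶ Z}
    (hfg : S.IsConflation f g) {V W : C} {h : W ⟶ Z} {h' : V ⟶ Y} {g' : V ⟶ W}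
    (hpb : IsPullback h' g' g h) (hg' : S.IsDeflation g') :
    ∃ μ : X ⟶ V, μ ≫ h' = f ∧ S.IsConflation μ g' := by
  have hcomm : f ≫ g = (0 : X ⟶ W) ≫ h := by rw [conf_w hS hfg, zero_comp]
  have hμ1 : hpb.lift f 0 hcomm ≫ h' = f := hpb.lift_fst _ _ _
  have hμ2 : hpb.lift f 0 hcomm ≫ g' = 0 := hpb.lift_snd _ _ _
  refine ⟨hpb.lift f 0 hcomm, hμ1, conf_of_ker hS hg' hμ2 ?_ ?_⟩
  · intro T u v huv
    refine conf_mono hS hfg ?_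
    rw [← hμ1, ← Category.assoc, ← Category.assoc, huv]
  · intro T t ht
    have h0 : (t ≫ h') ≫ g = 0 := by
      rw [Category.assoc, hpb.w, ← Category.assoc, ht, zero_comp]
    obtain ⟨z, hz⟩ := conf_lift hS hfg h0
    refine ⟨z, hpb.hom_ext ?_ ?_⟩
    · rw [Category.assoc, hμ1, hz]
    · rw [Category.assoc, hμ2, comp_zero, ht]

/-- In a pushout square of an inflation along a deflation, the parallel of the deflation
is a deflation, with the evident kernel. -/
theorem pushout_defl_conf (hS : S.IsExactStructure) {M X W Y Q : C} {m : M ⟶ X} {d : X ⟶ W}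
    {f : X ⟶ Y} {h' : Y ⟶ Q} {f' : W ⟶ Q}
    (hmd : S.IsConflation m d) (hf : S.IsInflation f) (hpo : IsPushout f d h' f') :
    S.IsConflation (m ≫ f) h' := by
  have hmf : S.IsInflation (m ≫ f) := hS.inflation_comp ⟨_, _, hmd⟩ hf
  refine conf_of_coker hS hmf ?_ ?_ ?_
  · rw [Category.assoc, hpo.w, ← Category.assoc, conf_w hS hmd, zero_comp]
  · intro V u v huv
    refine hpo.hom_ext huv (conf_epi hS hmd ?_)
    have e1 : d ≫ f' ≫ u = f ≫ h' ≫ u := by rw [← Category.assoc, ← hpo.w, Category.assoc]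
    have e2 : d ≫ f' ≫ v = f ≫ h' ≫ v := by rw [← Category.assoc, ← hpo.w, Category.assoc]
    rw [e1, e2, huv]
  · intro V t ht
    rw [Category.assoc] at ht
    obtain ⟨β, hβ⟩ := conf_desc hS hmd ht
    exact ⟨hpo.desc t β hβ.symm, hpo.inl_desc _ _ _⟩

/-- In a pullback square of an inflation along a deflation, the parallel of the inflation
is an inflation, with the evident cokernel. -/
theorem pullback_infl_conf (hS : S.IsExactStructure) {A B Cq E N : C} {a : A ⟶ B} {c : B ⟶ Cq}
    {ζ : E ⟶ B} {n : N ⟶ E} {q : N ⟶ A}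
    (hac : S.IsConflation a c) (hζ : S.IsDeflation ζ) (hpb : IsPullback n q ζ a) :
    S.IsConflation n (ζ ≫ c) := by
  have hζc : S.IsDeflation (ζ ≫ c) := hS.deflation_comp hζ ⟨A, a, hac⟩
  refine conf_of_ker hS hζc ?_ ?_ ?_
  · rw [← Category.assoc, hpb.w, Category.assoc, conf_w hS hac, comp_zero]
  · intro T u v huv
    refine hpb.hom_ext huv (conf_mono hS hac ?_)
    have e1 : (u ≫ q) ≫ a = u ≫ n ≫ ζ := by rw [Category.assoc, ← hpb.w]
    have e2 : (v ≫ q) ≫ a = v ≫ n ≫ ζ := by rw [Category.assoc, ← hpb.w]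
    rw [e1, e2, ← Category.assoc, ← Category.assoc, huv]
  · intro T t ht
    rw [← Category.assoc] at ht
    obtain ⟨α, hα⟩ := conf_lift hS hac ht
    exact ⟨hpb.lift t α hα.symm, hpb.lift_fst _ _ _⟩

/-- Kernel of a composite of deflations. -/
theorem ker_comp_conf (hS : S.IsExactStructure) {Y₀ E B A Cq : C} {ξ : Y₀ ⟶ E} {ζ : E ⟶ B}
    {a : A ⟶ B} {c : B ⟶ Cq} (hξζ : S.IsConflation ξ ζ) (hac : S.IsConflation a c) :
    ∃ (N : C) (n : N ⟶ E) (q : N ⟶ A) (ν : Y₀ ⟶ N),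
      S.IsConflation n (ζ ≫ c) ∧ S.IsConflation ν q ∧ ν ≫ n = ξ ∧ n ≫ ζ = q ≫ a := by
  obtain ⟨N, n, q, hpb, hq⟩ := hS.pullback_deflation ζ a ⟨_, _, hξζ⟩
  obtain ⟨ν, hν1, hνconf⟩ := pullback_conf_ker hS hξζ hpb hq
  exact ⟨N, n, q, ν, pullback_infl_conf hS hac ⟨_, _, hξζ⟩ hpb, hνconf, hν1, hpb.w⟩

end PullPush

section DirectSum

variable [HasZeroObject C] [HasBinaryBiproducts C]

theorem defl_map_id (hS : S.IsExactStructure) {Y Z : C} {g : Y ⟶ Z} (hg : S.IsDeflation g)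
    (Y' : C) : S.IsDeflation (biprod.map g (𝟙 Y')) := by
  obtain ⟨W₃, h₃, g₃, hpb₃, hg₃⟩ := hS.pullback_deflation g (biprod.fst : Z ⊞ Y' ⟶ Z) hg
  have hw : (biprod.fst : Y ⊞ Y' ⟶ Y) ≫ g = biprod.map g (𝟙 Y') ≫ biprod.fst := by simp
  have l1 : hpb₃.lift biprod.fst (biprod.map g (𝟙 Y')) hw ≫ h₃ = biprod.fst :=
    hpb₃.lift_fst _ _ _
  have l2 : hpb₃.lift biprod.fst (biprod.map g (𝟙 Y')) hw ≫ g₃ = biprod.map g (𝟙 Y') :=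
    hpb₃.lift_snd _ _ _
  have h1 : biprod.lift h₃ (g₃ ≫ biprod.snd) ≫ hpb₃.lift biprod.fst (biprod.map g (𝟙 Y')) hw
      = 𝟙 W₃ := by
    apply hpb₃.hom_ext
    · rw [Category.assoc, l1]; simp
    · rw [Category.assoc, l2]
      apply biprod.hom_ext
      · simp [← hpb₃.w]
      · simp
  have h2 : hpb₃.lift biprod.fst (biprod.map g (𝟙 Y')) hw ≫ biprod.lift h₃ (g₃ ≫ biprod.snd)
      = 𝟙 _ := by
    apply biprod.hom_ext
    · simp [l1]
    · rw [Category.assoc, biprod.lift_snd, ← Category.assoc, l2]; simp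
  have := defl_pre_iso hS hg₃
    (⟨hpb₃.lift biprod.fst (biprod.map g (𝟙 Y')) hw, biprod.lift h₃ (g₃ ≫ biprod.snd), h2, h1⟩ :
      (Y ⊞ Y') ≅ W₃)
  simpa [l2] using this

theorem defl_id_map (hS : S.IsExactStructure) {Y Z : C} {g : Y ⟶ Z} (hg : S.IsDeflation g)
    (Y' : C) : S.IsDeflation (biprod.map (𝟙 Y') g) := by
  have h := defl_map_id hS hg Y'
  have e1 : ((biprod.braiding Y' Y).hom ≫ biprod.map g (𝟙 Y')) ≫ (biprod.braiding Z Y').hom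
      = biprod.map (𝟙 Y') g := by
    apply biprod.hom_ext <;> simp [biprod.braiding]
  rw [← e1]
  exact defl_post_iso hS (defl_pre_iso hS h (biprod.braiding Y' Y)) (biprod.braiding Z Y')

theorem defl_map (hS : S.IsExactStructure) {Y Z Y' Z' : C} {g : Y ⟶ Z} {g' : Y' ⟶ Z'}
    (hg : S.IsDeflation g) (hg' : S.IsDeflation g') : S.IsDeflation (biprod.map g g') := by
  have : biprod.map g g' = biprod.map g (𝟙 Y') ≫ biprod.map (𝟙 Z) g' := by
    apply biprod.hom_ext <;> simp
  rw [this]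
  exact hS.deflation_comp (defl_map_id hS hg Y') (defl_id_map hS hg' Z)

theorem conf_biprod (hS : S.IsExactStructure) {X Y Z X' Y' Z' : C}
    {f : X ⟶ Y} {g : Y ⟶ Z} {f' : X' ⟶ Y'} {g' : Y' ⟶ Z'}
    (h1 : S.IsConflation f g) (h2 : S.IsConflation f' g') :
    S.IsConflation (biprod.map f f') (biprod.map g g') := by
  refine conf_of_ker hS (defl_map hS ⟨_, _, h1⟩ ⟨_, _, h2⟩) ?_ ?_ ?_
  · apply biprod.hom_ext <;> simp [conf_w hS h1, conf_w hS h2]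
  · intro W u v huv
    apply biprod.hom_ext
    · refine conf_mono hS h1 ?_
      have e : ∀ w : W ⟶ X ⊞ X', (w ≫ biprod.fst) ≫ f = w ≫ biprod.map f f' ≫ biprod.fst := by
        intro w; simp
      rw [e u, e v, ← Category.assoc, ← Category.assoc, huv]
    · refine conf_mono hS h2 ?_
      have e : ∀ w : W ⟶ X ⊞ X', (w ≫ biprod.snd) ≫ f' = w ≫ biprod.map f f' ≫ biprod.snd := by
        intro w; simp
      rw [e u, e v, ← Category.assoc, ← Category.assoc, huv]
  · intro W t ht
    have ha : (t ≫ biprod.fst) ≫ g = 0 := by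
      have : (t ≫ biprod.fst) ≫ g = t ≫ biprod.map g g' ≫ biprod.fst := by simp
      rw [this, ← Category.assoc, ht, zero_comp]
    have hb : (t ≫ biprod.snd) ≫ g' = 0 := by
      have : (t ≫ biprod.snd) ≫ g' = t ≫ biprod.map g g' ≫ biprod.snd := by simp
      rw [this, ← Category.assoc, ht, zero_comp]
    obtain ⟨za, hza⟩ := conf_lift hS h1 ha
    obtain ⟨zb, hzb⟩ := conf_lift hS h2 hb
    refine ⟨biprod.lift za zb, ?_⟩
    apply biprod.hom_ext <;> simp [hza, hzb]

theorem conf_biprod_fst (hS : S.IsExactStructure) {N M Cm : C} {n : N ⟶ M} {pg : M ⟶ Cm}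
    (h : S.IsConflation n pg) (K : C) :
    S.IsConflation (biprod.map n (𝟙 K)) ((biprod.fst : M ⊞ K ⟶ M) ≫ pg) := by
  obtain ⟨Z₀, g₀, hz, hconf₀, -⟩ := defl_to_zero hS K
  have hbig := conf_biprod hS h hconf₀
  have hsnd : (biprod.snd : Cm ⊞ Z₀ ⟶ Z₀) ≫ (biprod.inr : Z₀ ⟶ Cm ⊞ Z₀) = 0 := by
    have h0 : (𝟙 Z₀) = (0 : Z₀ ⟶ Z₀) := hz.eq_of_src _ _
    calc biprod.snd ≫ (biprod.inr : Z₀ ⟶ Cm ⊞ Z₀)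
        = biprod.snd ≫ (𝟙 Z₀) ≫ biprod.inr := by simp
      _ = 0 := by rw [h0]; simp
  have hfi : (biprod.fst : Cm ⊞ Z₀ ⟶ Cm) ≫ biprod.inl = 𝟙 (Cm ⊞ Z₀) := by
    have := biprod.total (X := Cm) (Y := Z₀)
    rw [hsnd, add_zero] at this; exact this
  have := conf_iso_right hS (⟨biprod.inl, biprod.fst, by simp, hfi⟩ : Cm ≅ Cm ⊞ Z₀) hbig
  have e : biprod.map pg g₀ ≫ biprod.fst = biprod.fst ≫ pg := by simp
  rw [show (⟨biprod.inl, biprod.fst, by simp, hfi⟩ : Cm ≅ Cm ⊞ Z₀).inv = biprod.fst from rfl,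
    e] at this
  exact this

end DirectSum

section Obscure

variable [HasZeroObject C] [HasBinaryBiproducts C]

/-- Cancellation of deflations: if `p` and `p ≫ g` are deflations, so is `g`. -/
theorem defl_of_defl_comp (hS : S.IsExactStructure) (hW : WeaklyIdempotentComplete C)
    {M B Cm : C} {p : M ⟶ B} {g : B ⟶ Cm}
    (hp : S.IsDeflation p) (hpg : S.IsDeflation (p ≫ g)) : S.IsDeflation g := by
  obtain ⟨P₂, θ, d₂, hpb₂, hd₂⟩ := hS.pullback_deflation (p ≫ g) g hpg
  have hρw : (𝟙 M) ≫ (p ≫ g) = p ≫ g := by simp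
  have hρθ : hpb₂.lift (𝟙 M) p hρw ≫ θ = 𝟙 M := hpb₂.lift_fst _ _ _
  have hρd : hpb₂.lift (𝟙 M) p hρw ≫ d₂ = p := hpb₂.lift_snd _ _ _
  obtain ⟨K, π, ι, hρπ, hιπ, hιθ, htot, hπepi⟩ := wic_split hW hρθ
  set u : K ⟶ B := ι ≫ d₂ with hu
  have hug : u ≫ g = 0 := by
    rw [hu, Category.assoc, ← hpb₂.w, ← Category.assoc, hιθ, zero_comp]
  -- kernel lifting property of u
  have klift : ∀ {T : C} (t : T ⟶ B), t ≫ g = 0 → ∃ z : T ⟶ K, z ≫ u = t := by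
    intro T t ht
    have hw0 : (0 : T ⟶ M) ≫ (p ≫ g) = t ≫ g := by rw [ht, zero_comp]
    refine ⟨hpb₂.lift 0 t hw0 ≫ π, ?_⟩
    have hπι : π ≫ ι = 𝟙 P₂ - θ ≫ hpb₂.lift (𝟙 M) p hρw := by
      rw [← htot]; abel
    rw [hu, Category.assoc, ← Category.assoc π, hπι]
    simp [Preadditive.sub_comp, hpb₂.lift_fst, hpb₂.lift_snd, hρd]
  have kmono : ∀ {T : C} {z z' : T ⟶ K}, z ≫ u = z' ≫ u → z = z' := by
    intro T z z' hzz
    have hι' : z ≫ ι = z' ≫ ι := by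
      apply hpb₂.hom_ext
      · rw [Category.assoc, hιθ, comp_zero, Category.assoc, hιθ, comp_zero]
      · rw [Category.assoc, Category.assoc, ← hu, hzz]
    calc z = z ≫ (ι ≫ π) := by rw [hιπ, Category.comp_id]
      _ = z' ≫ (ι ≫ π) := by rw [← Category.assoc, hι', Category.assoc]
      _ = z' := by rw [hιπ, Category.comp_id]
  -- the kernel of `p ≫ g`
  obtain ⟨N, n, hnpg⟩ := hpg
  obtain ⟨ξN, hξN⟩ := klift (n ≫ p) (by rw [Category.assoc, conf_w hS hnpg])
  -- ξN is a deflation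
  have hξNdefl : S.IsDeflation ξN := by
    obtain ⟨N₃, n₃, ξ₃, hpb₃, hξ₃⟩ := hS.pullback_deflation p u hp
    have hτ1 : hpb₃.lift n ξN hξN.symm ≫ n₃ = n := hpb₃.lift_fst _ _ _
    have hτ2 : hpb₃.lift n ξN hξN.symm ≫ ξ₃ = ξN := hpb₃.lift_snd _ _ _
    have hn₃ : n₃ ≫ (p ≫ g) = 0 := by
      rw [← Category.assoc, hpb₃.w, Category.assoc, hug, comp_zero]
    obtain ⟨τ', hτ'⟩ := conf_lift hS hnpg hn₃
    have hτ'ξ : τ' ≫ ξN = ξ₃ := by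
      apply kmono
      calc (τ' ≫ ξN) ≫ u = (τ' ≫ n) ≫ p := by
            rw [Category.assoc, hξN, Category.assoc]
        _ = ξ₃ ≫ u := by rw [hτ', hpb₃.w]
    have hii : hpb₃.lift n ξN hξN.symm ≫ τ' = 𝟙 N := by
      apply conf_mono hS hnpg
      rw [Category.assoc, hτ', hτ1, Category.id_comp]
    have hii' : τ' ≫ hpb₃.lift n ξN hξN.symm = 𝟙 N₃ := by
      apply hpb₃.hom_ext
      · rw [Category.assoc, hτ1, hτ', Category.id_comp]
      · rw [Category.assoc, hτ2, hτ'ξ, Category.id_comp]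
    have := defl_pre_iso hS hξ₃ (⟨hpb₃.lift n ξN hξN.symm, τ', hii, hii'⟩ : N ≅ N₃)
    simpa [hτ2] using this
  -- big conflation and pushout
  have hbig := conf_biprod_fst hS hnpg K
  obtain ⟨Q, σQ, jQ, ωQ, hpoQ, hconfQ, hσω⟩ := pushout_conf hS hbig (biprod.desc ξN (𝟙 K))
  -- the map χ : B ⟶ Q
  obtain ⟨N₀, n₀, hn₀⟩ := id hp
  obtain ⟨ν, hν⟩ := conf_lift hS hnpg
    (by rw [← Category.assoc, conf_w hS hn₀, zero_comp] : n₀ ≫ (p ≫ g) = 0)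
  have hνξ : ν ≫ ξN = 0 := by
    apply kmono
    calc (ν ≫ ξN) ≫ u = (ν ≫ n) ≫ p := by rw [Category.assoc, hξN, Category.assoc]
      _ = 0 ≫ u := by rw [hν, conf_w hS hn₀, zero_comp]
  have hn₀σ : n₀ ≫ biprod.inl ≫ σQ = 0 := by
    have e1 : (n ≫ biprod.inl) ≫ σQ = (biprod.inl ≫ biprod.map n (𝟙 K)) ≫ σQ := by
      rw [biprod.inl_map]
    have e2 : biprod.inl ≫ biprod.map n (𝟙 K) ≫ σQ
        = (biprod.inl : N ⟶ N ⊞ K) ≫ biprod.desc ξN (𝟙 K) ≫ jQ := by rw [hpoQ.w]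
    calc n₀ ≫ biprod.inl ≫ σQ = (ν ≫ n) ≫ biprod.inl ≫ σQ := by rw [hν]
      _ = ν ≫ (n ≫ biprod.inl) ≫ σQ := by simp only [Category.assoc]
      _ = ν ≫ biprod.inl ≫ biprod.map n (𝟙 K) ≫ σQ := by rw [e1, Category.assoc]
      _ = ν ≫ (biprod.inl : N ⟶ N ⊞ K) ≫ biprod.desc ξN (𝟙 K) ≫ jQ := by rw [e2]
      _ = (ν ≫ ξN) ≫ jQ := by simp
      _ = 0 := by rw [hνξ, zero_comp]
  obtain ⟨χ, hχ⟩ := conf_desc hS hn₀ hn₀σ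
  -- the map ρQ : Q ⟶ B
  have hdw : biprod.map n (𝟙 K) ≫ biprod.desc p u = biprod.desc ξN (𝟙 K) ≫ u := by
    apply biprod.hom_ext'
    · simp [hξN]
    · simp
  have hρ1 : σQ ≫ hpoQ.desc (biprod.desc p u) u hdw = biprod.desc p u := hpoQ.inl_desc _ _ _
  have hρ2 : jQ ≫ hpoQ.desc (biprod.desc p u) u hdw = u := hpoQ.inr_desc _ _ _
  set ρQ := hpoQ.desc (biprod.desc p u) u hdw with hρQ
  have hχρ : χ ≫ ρQ = 𝟙 B := by
    apply conf_epi hS hn₀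
    calc p ≫ χ ≫ ρQ = (biprod.inl ≫ σQ) ≫ ρQ := by rw [← Category.assoc, hχ]
      _ = biprod.inl ≫ biprod.desc p u := by rw [Category.assoc, hρ1]
      _ = p ≫ 𝟙 B := by simp
  have hinrσ : (biprod.inr : K ⟶ M ⊞ K) ≫ σQ = jQ := by
    have : (biprod.inr : K ⟶ N ⊞ K) ≫ biprod.map n (𝟙 K) ≫ σQ
        = (biprod.inr : K ⟶ N ⊞ K) ≫ biprod.desc ξN (𝟙 K) ≫ jQ := by rw [hpoQ.w]
    simpa using this
  have huχ : u ≫ χ = jQ := by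
    apply defl_cancel hS hξNdefl
    calc ξN ≫ u ≫ χ = (ξN ≫ u) ≫ χ := by simp only [Category.assoc]
      _ = n ≫ p ≫ χ := by rw [hξN, Category.assoc]
      _ = n ≫ biprod.inl ≫ σQ := by rw [hχ]
      _ = (biprod.inl ≫ biprod.map n (𝟙 K)) ≫ σQ := by rw [biprod.inl_map, Category.assoc]
      _ = biprod.inl ≫ biprod.desc ξN (𝟙 K) ≫ jQ := by rw [Category.assoc, hpoQ.w]
      _ = ξN ≫ jQ := by rw [← Category.assoc, biprod.inl_desc]
  have hρχ : ρQ ≫ χ = 𝟙 Q := by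
    apply hpoQ.hom_ext
    · simp only [Category.comp_id]
      rw [← Category.assoc, hρ1]
      apply biprod.hom_ext'
      · rw [← Category.assoc, biprod.inl_desc, hχ]
      · rw [← Category.assoc, biprod.inr_desc, huχ, hinrσ]
    · simp only [Category.comp_id]
      rw [← Category.assoc, hρ2, huχ]
  -- transport the conflation
  have := conf_iso_mid hS (⟨χ, ρQ, hχρ, hρχ⟩ : B ≅ Q) hconfQ
  have hjρ : jQ ≫ ρQ = u := hρ2
  have hχω : χ ≫ ωQ = g := by
    apply defl_cancel hS hp
    rw [← Category.assoc, hχ, Category.assoc, hσω]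
    simp
  rw [show (⟨χ, ρQ, hχρ, hρχ⟩ : B ≅ Q).inv = ρQ from rfl,
    show (⟨χ, ρQ, hχρ, hρχ⟩ : B ≅ Q).hom = χ from rfl, hjρ, hχω] at this
  exact ⟨K, u, this⟩

/-- The obscure axiom: if `f ≫ g` is a deflation then so is `g`. -/
theorem defl_of_comp_defl (hS : S.IsExactStructure) (hW : WeaklyIdempotentComplete C)
    {A B Cm : C} {f : A ⟶ B} {g : B ⟶ Cm} (hfg : S.IsDeflation (f ≫ g)) :
    S.IsDeflation g := by
  obtain ⟨P, h', g', hpb, hg'⟩ := hS.pullback_deflation (f ≫ g) g hfg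
  have hsw : (𝟙 A) ≫ (f ≫ g) = f ≫ g := by simp
  have hs : hpb.lift (𝟙 A) f hsw ≫ h' = 𝟙 A := hpb.lift_fst _ _ _
  have hh' : S.IsDeflation h' := retraction_deflation hS hW hs
  have : S.IsDeflation (g' ≫ g) := by
    rw [← hpb.w]
    exact hS.deflation_comp hh' hfg
  exact defl_of_defl_comp hS hW hg' this

end Obscure

section Perp

variable [HasZeroObject C] [HasBinaryBiproducts C]

theorem ext1Zero_of_iso_left (hS : S.IsExactStructure) {X X' Y : C} (e : X' ≅ X)
    (h : S.ext1Zero X Y) : S.ext1Zero X' Y := by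
  intro E f g hconf
  have h2 := conf_iso_right hS e.symm hconf
  rw [Iso.symm_inv] at h2
  obtain ⟨s, hs⟩ := h E f (g ≫ e.hom) h2
  refine ⟨e.hom ≫ s, ?_⟩
  have hsg : s ≫ g = e.inv := by
    calc s ≫ g = ((s ≫ g) ≫ e.hom) ≫ e.inv := by simp
      _ = e.inv := by rw [← Category.assoc] at hs; rw [hs, Category.id_comp]
  rw [Category.assoc, hsg, e.hom_inv_id]

theorem ext1Zero_of_iso_right (hS : S.IsExactStructure) {X Y Y' : C} (e : Y' ≅ Y)
    (h : S.ext1Zero X Y) : S.ext1Zero X Y' := by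
  intro E f g hconf
  have h2 := conf_iso_left hS e.symm hconf
  exact h E (e.inv ≫ f) g (by simpa using h2)

theorem ext1Zero_of_isZero (hX : IsZero X) (Y : C) : S.ext1Zero X Y :=
  fun E f g _ => ⟨0, hX.eq_of_src _ _⟩

theorem ext1Zero_biprod (hS : S.IsExactStructure) {X X' Y : C}
    (h : S.ext1Zero X Y) (h' : S.ext1Zero X' Y) : S.ext1Zero (X ⊞ X') Y := by
  intro E f g hconf
  obtain ⟨V, hV, gV, hpb, hgV⟩ := hS.pullback_deflation g biprod.inl ⟨_, _, hconf⟩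
  obtain ⟨μ, hμ, hconfV⟩ := pullback_conf_ker hS hconf hpb hgV
  obtain ⟨s₁, hs₁⟩ := h _ _ _ hconfV
  obtain ⟨V', hV', gV', hpb', hgV'⟩ := hS.pullback_deflation g biprod.inr ⟨_, _, hconf⟩
  obtain ⟨μ', hμ', hconfV'⟩ := pullback_conf_ker hS hconf hpb' hgV'
  obtain ⟨s₂, hs₂⟩ := h' _ _ _ hconfV'
  refine ⟨biprod.desc (s₁ ≫ hV) (s₂ ≫ hV'), ?_⟩
  apply biprod.hom_ext'
  · rw [← Category.assoc, biprod.inl_desc, Category.assoc, hpb.w, ← Category.assoc, hs₁]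
    simp
  · rw [← Category.assoc, biprod.inr_desc, Category.assoc, hpb'.w, ← Category.assoc, hs₂]
    simp

theorem ext1Zero_summand (hS : S.IsExactStructure) {X Z Y : C} (i : X ⟶ Z) (r : Z ⟶ X)
    (hir : i ≫ r = 𝟙 X) (h : S.ext1Zero Z Y) : S.ext1Zero X Y := by
  intro E f g hconf
  obtain ⟨V, hV, gV, hpb, hgV⟩ := hS.pullback_deflation g r ⟨_, _, hconf⟩
  obtain ⟨μ, hμ, hconfV⟩ := pullback_conf_ker hS hconf hpb hgV
  obtain ⟨s, hs⟩ := h _ _ _ hconfV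
  refine ⟨i ≫ s ≫ hV, ?_⟩
  calc (i ≫ s ≫ hV) ≫ g = i ≫ s ≫ hV ≫ g := by simp only [Category.assoc]
    _ = i ≫ (s ≫ gV) ≫ r := by rw [hpb.w]; simp only [Category.assoc]
    _ = 𝟙 X := by rw [hs, Category.id_comp, hir]

/-- Extension-closedness of `Ext¹(-, Y₀)`-vanishing. -/
theorem ext1Zero_ext (hS : S.IsExactStructure) {A B Cq Y₀ : C} {a : A ⟶ B} {c : B ⟶ Cq}
    (hconf : S.IsConflation a c) (hA : S.ext1Zero A Y₀) (hC : S.ext1Zero Cq Y₀) :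
    S.ext1Zero B Y₀ := by
  intro E ξ ζ hξζ
  obtain ⟨N, n, q, ν, hn_conf, hν_conf, hνn, hsq⟩ := ker_comp_conf hS hξζ hconf
  obtain ⟨s', hs'⟩ := hA _ _ _ hν_conf
  obtain ⟨rN, hrN1, hrN2, hrN3⟩ := conf_split hS hν_conf hs'
  obtain ⟨EE, σE, jc, ωE, hpoE, hconfE, hσω⟩ := pushout_conf hS hn_conf rN
  obtain ⟨sC, hsC⟩ := hC _ _ _ hconfE
  obtain ⟨rE, hrE1, hrE2, hrE3⟩ := conf_split hS hconfE hsC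
  have hθ : ξ ≫ σE ≫ rE = 𝟙 Y₀ := by
    calc ξ ≫ σE ≫ rE = ((ν ≫ n) ≫ σE) ≫ rE := by rw [hνn]; simp only [Category.assoc]
      _ = (ν ≫ (n ≫ σE)) ≫ rE := by simp only [Category.assoc]
      _ = (ν ≫ (rN ≫ jc)) ≫ rE := by rw [hpoE.w]
      _ = ν ≫ rN ≫ jc ≫ rE := by simp only [Category.assoc]
      _ = 𝟙 Y₀ := by rw [hrE1, Category.comp_id, hrN1]
  have hfac : ξ ≫ (𝟙 E - (σE ≫ rE) ≫ ξ) = 0 := by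
    rw [Preadditive.comp_sub, Category.comp_id, ← Category.assoc, ← Category.assoc]
    rw [Category.assoc ξ σE rE, hθ, Category.id_comp, sub_self]
  obtain ⟨u₀, hu₀⟩ := conf_desc hS hξζ hfac
  refine ⟨u₀, conf_epi hS hξζ ?_⟩
  rw [← Category.assoc, hu₀, Preadditive.sub_comp, Category.id_comp, Category.comp_id,
    Category.assoc, conf_w hS hξζ, comp_zero, sub_zero]

end Perp

section FacT

variable [HasZeroObject C] [HasBinaryBiproducts C]

theorem fac_self (hS : S.IsExactStructure) {T : Set C} {X : C} (hX : X ∈ T) : X ∈ S.Fac T :=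
  ⟨X, 𝟙 X, hX, hS.id_deflation X⟩

theorem fac_defl (hS : S.IsExactStructure) {T : Set C} {X Y : C} (hX : X ∈ S.Fac T)
    {g : X ⟶ Y} (hg : S.IsDeflation g) : Y ∈ S.Fac T := by
  obtain ⟨T', t, hT', ht⟩ := hX
  exact ⟨T', t ≫ g, hT', hS.deflation_comp ht hg⟩

theorem fac_iso (hS : S.IsExactStructure) {T : Set C} {X Y : C} (e : X ≅ Y)
    (hX : X ∈ S.Fac T) : Y ∈ S.Fac T :=
  fac_defl hS hX (iso_deflation hS e)

/-- `Fac T` is closed under extensions for a τ-rigid subcategory. -/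
theorem fac_ext (hS : S.IsExactStructure) {T : Set C} (hT : S.IsTauRigid T)
    {A B Cq : C} {f : A ⟶ B} {g : B ⟶ Cq} (hconf : S.IsConflation f g)
    (hA : A ∈ S.Fac T) (hC : Cq ∈ S.Fac T) : B ∈ S.Fac T := by
  obtain ⟨T_C, t, hTC, ht⟩ := hC
  obtain ⟨W, h', g', hpb, hg'⟩ := hS.pullback_deflation t g ht
  have hh' : S.IsDeflation h' := defl_of_isPullback hS hpb.flip ⟨_, _, hconf⟩
  obtain ⟨μ, hμ, hconfW⟩ := pullback_conf_ker hS hconf hpb.flip hh'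
  obtain ⟨s, hs⟩ := hT.2 T_C hTC A hA _ _ _ hconfW
  obtain ⟨e, he, -, -⟩ := conf_split_iso hS hconfW hs
  obtain ⟨T_A, tA, hTA, htA⟩ := hA
  have hd : S.IsDeflation ((biprod.map tA (𝟙 T_C) ≫ e.symm.hom) ≫ g') :=
    hS.deflation_comp (defl_post_iso hS (defl_map_id hS htA T_C) e.symm) hg'
  exact ⟨T_A ⊞ T_C, _, hT.1.biprod_mem hTA hTC, hd⟩

end FacT

section Crux

variable [HasZeroObject C] [HasBinaryBiproducts C]

/-- Key lemma: for a τ-rigid subcategory with approximation sequences, every object of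
`Fac T` admits a conflation `U ↣ V ↠ X` with `V ∈ T` and `U ∈ Fac T`. -/
theorem fac_resolution (hS : S.IsExactStructure) (hW : WeaklyIdempotentComplete C)
    {T : Set C} (hT : S.IsTauRigid T)
    (happrox : ∀ P ∈ S.projClass, S.ApproxSeq T P) (hEP : S.HasEnoughProjectives)
    {X : C} (hX : X ∈ S.Fac T) :
    ∃ (U V : C) (u : U ⟶ V) (v : V ⟶ X), V ∈ T ∧ U ∈ S.Fac T ∧ S.IsConflation u v := by
  obtain ⟨T', t, hT', ht⟩ := hX
  obtain ⟨Y, y, hyt⟩ := ht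
  obtain ⟨Q, πQ, hQproj, hπQ⟩ := hEP Y
  obtain ⟨K, T₀, T₁, dQ, iQ, gQ, hT₁, hdQ, hiq_conf, hT₀, hfact⟩ := happrox Q hQproj
  obtain ⟨cc, hcc⟩ := hfact T' hT' (πQ ≫ y)
  have hψt : (iQ ≫ cc) ≫ t = 0 := by
    apply defl_cancel hS hdQ
    calc dQ ≫ (iQ ≫ cc) ≫ t = ((dQ ≫ iQ) ≫ cc) ≫ t := by simp only [Category.assoc]
      _ = (πQ ≫ y) ≫ t := by rw [hcc]
      _ = dQ ≫ 0 := by rw [Category.assoc, conf_w hS hyt, comp_zero, comp_zero]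
  obtain ⟨w, hw⟩ := conf_lift hS hyt hψt
  have hwdefl : S.IsDeflation w := by
    have hdw : dQ ≫ w = πQ := by
      apply conf_mono hS hyt
      calc (dQ ≫ w) ≫ y = dQ ≫ (w ≫ y) := by simp only [Category.assoc]
        _ = (dQ ≫ iQ) ≫ cc := by rw [hw]; simp only [Category.assoc]
        _ = πQ ≫ y := hcc
    exact defl_of_defl_comp hS hW hdQ (by rw [hdw]; exact hπQ)
  obtain ⟨U, hU', υ, ω, hpoU, hconfU, hUω⟩ := pushout_conf hS hiq_conf w
  obtain ⟨MW, mw, hmw⟩ := hwdefl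
  have hU'conf : S.IsConflation (mw ≫ iQ) hU' := pushout_defl_conf hS hmw ⟨_, _, hiq_conf⟩ hpoU
  have hUFac : U ∈ S.Fac T := ⟨T₀, hU', hT₀, ⟨_, _, hU'conf⟩⟩
  obtain ⟨V, σV, jV, ωV, hpoV, hconfV, hσV⟩ := pushout_conf hS hconfU y
  obtain ⟨V₂, h₂, j₂, τ₂, hpoV₂, hconfV₂, hτ₂⟩ := pushout_conf hS hyt υ
  have hww : υ ≫ j₂ = y ≫ h₂ := hpoV₂.w.symm
  have hww' : y ≫ jV = υ ≫ σV := hpoV.w.symm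
  have he1 : σV ≫ hpoV.desc j₂ h₂ hww = j₂ := hpoV.inl_desc _ _ _
  have he2 : jV ≫ hpoV.desc j₂ h₂ hww = h₂ := hpoV.inr_desc _ _ _
  have he3 : h₂ ≫ hpoV₂.desc jV σV hww' = jV := hpoV₂.inl_desc _ _ _
  have he4 : j₂ ≫ hpoV₂.desc jV σV hww' = σV := hpoV₂.inr_desc _ _ _
  have hee : hpoV.desc j₂ h₂ hww ≫ hpoV₂.desc jV σV hww' = 𝟙 V := by
    apply hpoV.hom_ext
    · rw [← Category.assoc, he1, he4, Category.comp_id]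
    · rw [← Category.assoc, he2, he3, Category.comp_id]
  have hee' : hpoV₂.desc jV σV hww' ≫ hpoV.desc j₂ h₂ hww = 𝟙 V₂ := by
    apply hpoV₂.hom_ext
    · rw [← Category.assoc, he3, he2, Category.comp_id]
    · rw [← Category.assoc, he4, he1, Category.comp_id]
  have hconfX := conf_iso_mid hS
    (⟨hpoV.desc j₂ h₂ hww, hpoV₂.desc jV σV hww', hee, hee'⟩ : V ≅ V₂) hconfV₂
  rw [show (⟨hpoV.desc j₂ h₂ hww, hpoV₂.desc jV σV hww', hee, hee'⟩ : V ≅ V₂).inv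
      = hpoV₂.desc jV σV hww' from rfl,
    show (⟨hpoV.desc j₂ h₂ hww, hpoV₂.desc jV σV hww', hee, hee'⟩ : V ≅ V₂).hom
      = hpoV.desc j₂ h₂ hww from rfl, he4] at hconfX
  -- split the conflation (jV, ωV)
  obtain ⟨s₁, hs₁⟩ := hT.2 T₁ hT₁ T' (fac_self hS hT') _ _ _ hconfV
  obtain ⟨eV, -, -, -⟩ := conf_split_iso hS hconfV hs₁
  have hVT : V ∈ T := hT.1.mem_of_iso eV.symm (hT.1.biprod_mem hT' hT₁)
  exact ⟨U, V, σV, _, hVT, hUFac, hconfX⟩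

theorem fac_torsion (hS : S.IsExactStructure) {T : Set C} (hT : S.IsTauRigid T) :
    S.IsTorsionClass (S.Fac T) :=
  ⟨fun g hX hg => fac_defl hS hX hg, fun hconf hX hZ => fac_ext hS hT hconf hX hZ⟩

theorem perp1_fac_inter (hS : S.IsExactStructure) (hW : WeaklyIdempotentComplete C)
    (hEP : S.HasEnoughProjectives) {T : Set C} (hsτ : S.IsSupportTauTilting T) :
    S.perp1 (S.Fac T) ∩ S.Fac T = T := by
  ext X
  constructor
  · rintro ⟨hXperp, hXfac⟩
    obtain ⟨U, V, u, v, hVT, hUFac, hconf⟩ :=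
      fac_resolution hS hW hsτ.1 hsτ.2 hEP hXfac
    obtain ⟨s, hs⟩ := hXperp U hUFac _ _ _ hconf
    exact hsτ.1.1.summand_mem hVT s v hs
  · intro hXT
    exact ⟨fun Y hY => hsτ.1.2 X hXT Y hY, fac_self hS hXT⟩

theorem sτ_taucotorsion (hS : S.IsExactStructure) {T : Set C}
    (hsτ : S.IsSupportTauTilting T) :
    S.IsTauCotorsionPair (S.perp1 (S.Fac T)) (S.Fac T) := by
  refine ⟨rfl, ?_⟩
  intro P hPmem
  obtain ⟨K, T₀, T₁, d, i, g, hT₁, hd, hig, hT₀, hfact⟩ := hsτ.2 P hPmem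
  refine ⟨K, T₀, T₁, d, i, g, fun Y hY => hsτ.1.2 T₀ hT₀ Y hY, fac_self hS hT₀,
    fun Y hY => hsτ.1.2 T₁ hT₁ Y hY, hd, hig, fac_self hS hT₀, ?_⟩
  intro T'' hT'' u
  obtain ⟨T₂, t₂, hT₂, ht₂⟩ := hT''
  obtain ⟨v, hv⟩ := hPmem t₂ ht₂ u
  obtain ⟨cc, hcc⟩ := hfact T₂ hT₂ v
  refine ⟨cc ≫ t₂, ?_⟩
  rw [← Category.assoc, hcc, hv]

end Crux

section Part2

variable [HasZeroObject C] [HasBinaryBiproducts C]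

theorem taucot_to_sτ (hS : S.IsExactStructure) (hW : WeaklyIdempotentComplete C)
    (hEP : S.HasEnoughProjectives) {Cc D : Set C} (hCD : S.IsTauCotorsionPair Cc D)
    (htor : S.IsTorsionClass D) :
    S.IsSupportTauTilting (Cc ∩ D) ∧ S.Fac (Cc ∩ D) = D ∧ S.perp1 (S.Fac (Cc ∩ D)) = Cc := by
  obtain ⟨hCc, happrox⟩ := hCD
  subst hCc
  have hDiso : ∀ {X Y : C}, (X ≅ Y) → X ∈ D → Y ∈ D := fun e hX =>
    htor.1 e.hom hX (iso_deflation hS e)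
  have hFac : S.Fac (S.perp1 D ∩ D) = D := by
    apply Set.eq_of_subset_of_subset
    · rintro X ⟨T', g, ⟨hT'Cc, hT'D⟩, hg⟩
      exact htor.1 g hT'D hg
    · intro X hX
      obtain ⟨P, p, hPproj, hp⟩ := hEP X
      obtain ⟨K, D0, C0, d, i, g, hD0Cc, hD0D, hC0Cc, hd, hig, hLA⟩ := happrox P hPproj
      obtain ⟨v, hv⟩ := hLA.2 X hX p
      have hvdefl : S.IsDeflation v :=
        defl_of_comp_defl hS hW (f := d ≫ i) (by rw [hv]; exact hp)
      exact ⟨D0, v, ⟨hD0Cc, hD0D⟩, hvdefl⟩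
  have hDne : ∃ D0, D0 ∈ D := by
    obtain ⟨P, p, hPproj, hp⟩ := hEP (0 : C)
    obtain ⟨K, D0, C0, d, i, g, hD0Cc, hD0D, _⟩ := happrox P hPproj
    exact ⟨D0, hD0D⟩
  have hzeroD : (0 : C) ∈ D := by
    obtain ⟨D0, hD0⟩ := hDne
    obtain ⟨Z₀, g₀, hz, -, hdefl⟩ := defl_to_zero hS D0
    exact hDiso hz.isoZero (htor.1 g₀ hD0 hdefl)
  refine ⟨⟨⟨?_, ?_⟩, ?_⟩, hFac, by rw [hFac]⟩
  · -- additively closed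
    refine ⟨?_, ⟨?_, ?_⟩, ?_, ?_⟩
    · rintro X Y e ⟨hXCc, hXD⟩
      exact ⟨fun Y' hY' => ext1Zero_of_iso_left hS e.symm (hXCc Y' hY'), hDiso e hXD⟩
    · intro Y hY
      exact ext1Zero_of_isZero (isZero_zero C) Y
    · exact hzeroD
    · rintro X Y ⟨hXCc, hXD⟩ ⟨hYCc, hYD⟩
      exact ⟨fun Y' hY' => ext1Zero_biprod hS (hXCc Y' hY') (hYCc Y' hY'),
        htor.2 (conf_inl_snd hS X Y) hXD hYD⟩
    · rintro X Z ⟨hZCc, hZD⟩ i r hir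
      exact ⟨fun Y' hY' => ext1Zero_summand hS i r hir (hZCc Y' hY'),
        htor.1 r hZD (retraction_deflation hS hW hir)⟩
  · -- τ-rigidity
    rintro T' ⟨hT'Cc, hT'D⟩ X hX
    have hXD : X ∈ D := hFac ▸ hX
    exact hT'Cc X hXD
  · -- approximation sequences
    intro P hPproj
    obtain ⟨K, D0, C0, d, i, g, hD0Cc, hD0D, hC0Cc, hd, hig, hLA⟩ := happrox P hPproj
    refine ⟨K, D0, C0, d, i, g, ⟨hC0Cc, htor.1 g hD0D ⟨_, _, hig⟩⟩, hd, hig,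
      ⟨hD0Cc, hD0D⟩, ?_⟩
    rintro T'' ⟨-, hT''D⟩ u
    exact hLA.2 T'' hT''D u

end Part2

section TiltingAux

theorem projObj_ext1Zero (hP : S.IsProjObj P) (Y : C) : S.ext1Zero P Y := by
  intro E f g hconf
  exact hP g ⟨_, _, hconf⟩ (𝟙 P)

theorem isProjRel_univ_of (hP : S.IsProjObj P) : S.IsProjRel Set.univ P :=
  ⟨trivial, fun Y Z g _ _ hg u => by
    obtain ⟨X, f, -, hconf⟩ := hg
    exact hP g ⟨X, f, hconf⟩ u⟩

theorem lift_of_isProjRel {P : C} (h : S.IsProjRel Set.univ P) {Y Z : C} {g : Y ⟶ Z}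
    (hg : S.IsDeflation g) (u : P ⟶ Z) : ∃ v : P ⟶ Y, v ≫ g = u := by
  obtain ⟨X, f, hconf⟩ := hg
  exact h.2 g trivial trivial ⟨X, f, trivial, hconf⟩ u

theorem projRel_ext1Zero {P : C} (h : S.IsProjRel Set.univ P) (Y : C) : S.ext1Zero P Y := by
  intro E f g hconf
  exact lift_of_isProjRel h ⟨_, _, hconf⟩ (𝟙 P)

theorem ext1Zero_of_rel {X Y : C} (h : S.ext1ZeroRel Set.univ X Y) : S.ext1Zero X Y :=
  fun E f g hc => h E f g trivial hc

theorem ext1ZeroRel_of (h : S.ext1Zero X Y) : S.ext1ZeroRel Set.univ X Y :=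
  fun E f g _ hc => h E f g hc

variable [HasZeroObject C] [HasBinaryBiproducts C]

/-- An Ext-projective object satisfies all higher Ext-vanishing. -/
theorem extSucc_of_extProj (hS : S.IsExactStructure) :
    ∀ (n : ℕ) (X : C), (∀ Y : C, S.ext1Zero X Y) → ∀ Y : C, S.extSuccZero n X Y := by
  intro n
  induction n with
  | zero => exact fun X hX Y => ext1ZeroRel_of (hX Y)
  | succ m ih =>
    intro X hX Y K P i p _ hPrel hconf
    obtain ⟨s, hs⟩ := hX K P i p hconf
    obtain ⟨r, hr, -, -⟩ := conf_split hS hconf hs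
    exact ih K (fun Y' => ext1Zero_summand hS i r hr (projRel_ext1Zero hPrel Y')) Y

/-- The PD lemma: kernels of projective presentations of objects of `⊥₁ D` are
Ext-projective, for a torsion class `D` with enough "injective-like" objects. -/
theorem syzygy_ext_proj (hS : S.IsExactStructure) {D : Set C}
    (htorfac : ∀ {X Y : C} (g : X ⟶ Y), X ∈ D → S.IsDeflation g → Y ∈ D)
    (hcompl2 : ∀ X : C, ∃ (D1 Cq : C) (f : X ⟶ D1) (g : D1 ⟶ Cq),
      D1 ∈ D ∧ S.IsConflation f g)
    {T' K P : C} (hT'orth : ∀ Y ∈ D, S.ext1Zero T' Y)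
    {i : K ⟶ P} {p : P ⟶ T'} (hPrel : S.IsProjRel Set.univ P)
    (hconf : S.IsConflation i p) (Y : C) : S.ext1Zero K Y := by
  intro E ξ ζ hξζ
  obtain ⟨DE, CE, jE, qE, hDE, hjq⟩ := hcompl2 E
  obtain ⟨Wst, σst, jst, πst, hpoW, hconfW, hσπ⟩ := pushout_conf hS hjq ζ
  have hσconf : S.IsConflation (ξ ≫ jE) σst := pushout_defl_conf hS hξζ ⟨_, _, hjq⟩ hpoW
  have hWD : Wst ∈ D := htorfac σst hDE ⟨_, _, hσconf⟩
  obtain ⟨H, h₁, jH, πH, hpoH, hconfH, hπ⟩ := pushout_conf hS hconfW i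
  obtain ⟨H₂, h₂, j₂, π₂, hpoH₂, hconfH₂, hπ₂⟩ := pushout_conf hS hconf jst
  have he1 : h₁ ≫ hpoH.desc j₂ h₂ hpoH₂.w.symm = j₂ := hpoH.inl_desc _ _ _
  have he2 : jH ≫ hpoH.desc j₂ h₂ hpoH₂.w.symm = h₂ := hpoH.inr_desc _ _ _
  obtain ⟨sH, hsH⟩ := hT'orth Wst hWD _ _ _ hconfH₂
  obtain ⟨rH, hrH, -, -⟩ := conf_split hS hconfH₂ hsH
  obtain ⟨Λ, hΛ⟩ := lift_of_isProjRel hPrel ⟨_, _, hσconf⟩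
    (jH ≫ hpoH.desc j₂ h₂ hpoH₂.w.symm ≫ rH)
  have hμσ : (i ≫ Λ) ≫ σst = jst := by
    calc (i ≫ Λ) ≫ σst = i ≫ (Λ ≫ σst) := by simp only [Category.assoc]
      _ = (i ≫ jH) ≫ hpoH.desc j₂ h₂ hpoH₂.w.symm ≫ rH := by
          rw [hΛ]; simp only [Category.assoc]
      _ = (jst ≫ h₁) ≫ hpoH.desc j₂ h₂ hpoH₂.w.symm ≫ rH := by rw [hpoH.w]
      _ = jst ≫ (h₁ ≫ hpoH.desc j₂ h₂ hpoH₂.w.symm) ≫ rH := by simp only [Category.assoc]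
      _ = jst := by rw [he1, hrH, Category.comp_id]
  have hμq : (i ≫ Λ) ≫ qE = 0 := by
    calc (i ≫ Λ) ≫ qE = (i ≫ Λ) ≫ σst ≫ πst := by rw [hσπ]
      _ = jst ≫ πst := by rw [← Category.assoc, hμσ]
      _ = 0 := conf_w hS hconfW
  obtain ⟨st, hst⟩ := conf_lift hS hjq hμq
  refine ⟨st, conf_mono hS hconfW ?_⟩
  calc (st ≫ ζ) ≫ jst = st ≫ (ζ ≫ jst) := by simp only [Category.assoc]
    _ = (st ≫ jE) ≫ σst := by rw [← hpoW.w]; simp only [Category.assoc]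
    _ = (i ≫ Λ) ≫ σst := by rw [hst]
    _ = 𝟙 K ≫ jst := by rw [hμσ, Category.id_comp]

end TiltingAux

section Part34

variable [HasZeroObject C] [HasBinaryBiproducts C]

theorem tilting_approx (hS : S.IsExactStructure) {T : Set C} (hT : S.IsTilting T) :
    ∀ P ∈ S.projClass, S.ApproxSeq T P := by
  intro P hP
  obtain ⟨T0, T1, f, g, hT0, hT1, hconf⟩ := hT.2.2.2 P hP
  refine ⟨P, T0, T1, 𝟙 P, f, g, hT1, hS.id_deflation P, hconf, hT0, ?_⟩
  intro T'' hT'' u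
  obtain ⟨V, h'V, jV, ωV, hpoV, hconfV, hωV⟩ := pushout_conf hS hconf u
  have hext : S.ext1Zero T1 T'' := ext1Zero_of_rel (hT.2.1 T1 hT1 T'' hT'' 0)
  obtain ⟨sV, hsV⟩ := hext _ _ _ hconfV
  obtain ⟨rV, hrV, -, -⟩ := conf_split hS hconfV hsV
  refine ⟨h'V ≫ rV, ?_⟩
  calc (𝟙 P ≫ f) ≫ h'V ≫ rV = (f ≫ h'V) ≫ rV := by simp only [Category.id_comp, Category.assoc]
    _ = (u ≫ jV) ≫ rV := by rw [hpoV.w]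
    _ = u := by rw [Category.assoc, hrV, Category.comp_id]

theorem tilting_taurigid (hS : S.IsExactStructure) (hEP : S.HasEnoughProjectives)
    {T : Set C} (hT : S.IsTilting T) : S.IsTauRigid T := by
  refine ⟨hT.1, ?_⟩
  intro T' hT' X hX E ξ ζ hξζ
  obtain ⟨T_X, t, hTX, ht⟩ := hX
  obtain ⟨Y, yX, hyt⟩ := ht
  obtain ⟨P', p', hP'proj, hp'⟩ := hEP T'
  obtain ⟨K', k', hk'⟩ := hp'
  have hK'Y : S.ext1Zero K' Y :=
    ext1Zero_of_rel (hT.2.2.1 T' hT' Y K' P' k' p' trivial (isProjRel_univ_of hP'proj) hk')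
  obtain ⟨eb, heb⟩ := hP'proj ζ ⟨_, _, hξζ⟩ p'
  have hkz : (k' ≫ eb) ≫ ζ = 0 := by
    rw [Category.assoc, heb, conf_w hS hk']
  obtain ⟨κ, hκ⟩ := conf_lift hS hξζ hkz
  obtain ⟨Wκ, hκ', gκ, hpbκ, hgκ⟩ := hS.pullback_deflation t κ ⟨_, _, hyt⟩
  obtain ⟨μκ, hμκ, hconfκ⟩ := pullback_conf_ker hS hyt hpbκ hgκ
  obtain ⟨sκ, hsκ⟩ := hK'Y _ _ _ hconfκ
  have hlamt : (sκ ≫ hκ') ≫ t = κ := by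
    calc (sκ ≫ hκ') ≫ t = sκ ≫ (hκ' ≫ t) := by simp only [Category.assoc]
      _ = (sκ ≫ gκ) ≫ κ := by rw [hpbκ.w]; simp only [Category.assoc]
      _ = κ := by rw [hsκ, Category.id_comp]
  obtain ⟨E', h'E, jE, ωE, hpoE, hconfE, hωE⟩ := pushout_conf hS hk' (sκ ≫ hκ')
  have hdescw : k' ≫ eb = (sκ ≫ hκ') ≫ (t ≫ ξ) := by
    rw [← hκ, ← hlamt]; simp only [Category.assoc]
  have hΘ1 : h'E ≫ hpoE.desc eb (t ≫ ξ) hdescw = eb := hpoE.inl_desc _ _ _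
  have hΘ2 : jE ≫ hpoE.desc eb (t ≫ ξ) hdescw = t ≫ ξ := hpoE.inr_desc _ _ _
  have hΘζ : hpoE.desc eb (t ≫ ξ) hdescw ≫ ζ = ωE := by
    apply hpoE.hom_ext
    · rw [← Category.assoc, hΘ1, heb, hωE]
    · rw [← Category.assoc, hΘ2, Category.assoc, conf_w hS hξζ, comp_zero,
        conf_w hS hconfE]
  have hextTX : S.ext1Zero T' T_X := ext1Zero_of_rel (hT.2.1 T' hT' T_X hTX 0)
  obtain ⟨sE, hsE⟩ := hextTX _ _ _ hconfE
  refine ⟨sE ≫ hpoE.desc eb (t ≫ ξ) hdescw, ?_⟩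
  rw [Category.assoc, hΘζ, hsE]

theorem tilting_sτ (hS : S.IsExactStructure) (hEP : S.HasEnoughProjectives)
    {T : Set C} (hT : S.IsTilting T) : S.IsSupportTauTilting T :=
  ⟨tilting_taurigid hS hEP hT, tilting_approx hS hT⟩

theorem tilting_cotorsion (hS : S.IsExactStructure) (hW : WeaklyIdempotentComplete C)
    (hEP : S.HasEnoughProjectives) {T : Set C} (hT : S.IsTilting T) :
    S.IsCotorsionPair (S.perp1 (S.Fac T)) (S.Fac T) := by
  have hrig := tilting_taurigid hS hEP hT
  have compl2 : ∀ X : C, ∃ (D1 C1 : C) (f : X ⟶ D1) (g : D1 ⟶ C1),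
      D1 ∈ S.Fac T ∧ C1 ∈ S.perp1 (S.Fac T) ∧ S.IsConflation f g := by
    intro X
    obtain ⟨P, p, hPproj, hp⟩ := hEP X
    obtain ⟨YP, yP, hyp⟩ := hp
    obtain ⟨T0, T1, fP, gP, hT0, hT1, hconfP⟩ := hT.2.2.2 P hPproj
    obtain ⟨V, h'V, jX, ωV, hpoV, hconfV, hgP⟩ := pushout_conf hS hconfP p
    have hVfac : V ∈ S.Fac T :=
      ⟨T0, h'V, hT0, ⟨_, _, pushout_defl_conf hS hyp ⟨_, _, hconfP⟩ hpoV⟩⟩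
    exact ⟨V, T1, jX, ωV, hVfac, fun Y hY => hrig.2 T1 hT1 Y hY, hconfV⟩
  refine ⟨?_, ?_, ?_, ?_, ?_⟩
  · exact fun {X Z} hZ i r hir Y hY => ext1Zero_summand hS i r hir (hZ Y hY)
  · exact fun {X Z} hZ i r hir => fac_defl hS hZ (retraction_deflation hS hW hir)
  · exact fun X hX Y hY => hX Y hY
  · intro X
    obtain ⟨P, p, hPproj, hp⟩ := hEP X
    obtain ⟨YP, yP, hyp⟩ := hp
    obtain ⟨D1', C1', jY, q1, hD1', hC1', hconfY⟩ := compl2 YP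
    obtain ⟨V₁, h₁', j₁', τ₁, hpo₁, hconf₁, hτ₁⟩ := pushout_conf hS hyp jY
    obtain ⟨V₂, h₂', j₂', ρ₂, hpo₂, hconf₂, hρ₂⟩ := pushout_conf hS hconfY yP
    have he1 : h₁' ≫ hpo₁.desc j₂' h₂' hpo₂.w.symm = j₂' := hpo₁.inl_desc _ _ _
    have he2 : j₁' ≫ hpo₁.desc j₂' h₂' hpo₂.w.symm = h₂' := hpo₁.inr_desc _ _ _
    have he3 : h₂' ≫ hpo₂.desc j₁' h₁' hpo₁.w.symm = j₁' := hpo₂.inl_desc _ _ _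
    have he4 : j₂' ≫ hpo₂.desc j₁' h₁' hpo₁.w.symm = h₁' := hpo₂.inr_desc _ _ _
    have hee : hpo₁.desc j₂' h₂' hpo₂.w.symm ≫ hpo₂.desc j₁' h₁' hpo₁.w.symm = 𝟙 V₁ := by
      apply hpo₁.hom_ext
      · rw [← Category.assoc, he1, he4, Category.comp_id]
      · rw [← Category.assoc, he2, he3, Category.comp_id]
    have hee' : hpo₂.desc j₁' h₁' hpo₁.w.symm ≫ hpo₁.desc j₂' h₂' hpo₂.w.symm = 𝟙 V₂ := by
      apply hpo₂.hom_ext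
      · rw [← Category.assoc, he3, he2, Category.comp_id]
      · rw [← Category.assoc, he4, he1, Category.comp_id]
    have hconfP1 := conf_iso_mid hS
      (⟨hpo₁.desc j₂' h₂' hpo₂.w.symm, hpo₂.desc j₁' h₁' hpo₁.w.symm, hee, hee'⟩ : V₁ ≅ V₂)
      hconf₂
    rw [show (⟨hpo₁.desc j₂' h₂' hpo₂.w.symm, hpo₂.desc j₁' h₁' hpo₁.w.symm, hee, hee'⟩ :
        V₁ ≅ V₂).inv = hpo₂.desc j₁' h₁' hpo₁.w.symm from rfl,
      show (⟨hpo₁.desc j₂' h₂' hpo₂.w.symm, hpo₂.desc j₁' h₁' hpo₁.w.symm, hee, hee'⟩ :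
        V₁ ≅ V₂).hom = hpo₁.desc j₂' h₂' hpo₂.w.symm from rfl, he4] at hconfP1
    have hV₁perp : V₁ ∈ S.perp1 (S.Fac T) := fun Y₀ hY₀ =>
      ext1Zero_ext hS hconfP1 (projObj_ext1Zero hPproj Y₀) (hC1' Y₀ hY₀)
    exact ⟨D1', V₁, j₁', τ₁, hD1', hV₁perp, hconf₁⟩
  · intro X
    obtain ⟨D1, C1, f, g, hD1, hC1, hconf⟩ := compl2 X
    exact ⟨D1, C1, f, g, hD1, hC1, hconf⟩

end Part34

section Part4

variable [HasZeroObject C] [HasBinaryBiproducts C]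

theorem cot_to_tilting (hS : S.IsExactStructure) (hW : WeaklyIdempotentComplete C)
    (hEP : S.HasEnoughProjectives) {Cc D : Set C} (hCP : S.IsCotorsionPair Cc D)
    (htor : S.IsTorsionClass D) :
    S.IsTilting (Cc ∩ D) ∧ S.Fac (Cc ∩ D) = D ∧ S.perp1 (S.Fac (Cc ∩ D)) = Cc := by
  obtain ⟨hCcSum, hDSum, horth, hcompl1, hcompl2⟩ := hCP
  have hmemCc : ∀ {Z : C}, (∀ Y ∈ D, S.ext1Zero Z Y) → Z ∈ Cc := by
    intro Z hZ
    obtain ⟨D0, C0, f, g, hD0, hC0, hconf⟩ := hcompl1 Z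
    obtain ⟨s, hs⟩ := hZ D0 hD0 _ _ _ hconf
    exact hCcSum hC0 s g hs
  have hcompl2' : ∀ X : C, ∃ (D1 Cq : C) (f : X ⟶ D1) (g : D1 ⟶ Cq),
      D1 ∈ D ∧ S.IsConflation f g := by
    intro X; obtain ⟨D1, C1, f, g, hD1, hC1, hconf⟩ := hcompl2 X
    exact ⟨D1, C1, f, g, hD1, hconf⟩
  have hsyz : ∀ {T' K P : C}, T' ∈ Cc → ∀ {i : K ⟶ P} {p : P ⟶ T'},
      S.IsProjRel Set.univ P → S.IsConflation i p → ∀ Y, S.ext1Zero K Y := by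
    intro T' K P hT' i p hPrel hconf Y
    exact syzygy_ext_proj hS (fun g hX hg => htor.1 g hX hg) hcompl2'
      (fun Y' hY' => horth T' hT' Y' hY') hPrel hconf Y
  have hFac : S.Fac (Cc ∩ D) = D := by
    apply Set.eq_of_subset_of_subset
    · rintro X ⟨T', g, ⟨hCc', hD'⟩, hg⟩
      exact htor.1 g hD' hg
    · intro X hX
      obtain ⟨D0, C0, f, g, hD0, hC0, hconf⟩ := hcompl1 X
      exact ⟨C0, g, ⟨hC0, htor.2 hconf hD0 hX⟩, ⟨_, _, hconf⟩⟩
  have hCceq : S.perp1 D = Cc := by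
    apply Set.eq_of_subset_of_subset
    · intro X hX; exact hmemCc (fun Y hY => hX Y hY)
    · intro X hX Y hY; exact horth X hX Y hY
  refine ⟨⟨⟨?_, ?_, ?_, ?_⟩, ?_, ?_, ?_⟩, hFac, by rw [hFac]; exact hCceq⟩
  · rintro X Y e ⟨hXCc, hXD⟩
    exact ⟨hCcSum hXCc e.inv e.hom e.inv_hom_id, htor.1 e.hom hXD (iso_deflation hS e)⟩
  · constructor
    · exact hmemCc (fun Y _ => ext1Zero_of_isZero (isZero_zero C) Y)
    · obtain ⟨D1, C1, f, g, hD1, hconf⟩ := hcompl2' (0 : C)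
      exact hDSum hD1 0 0 ((isZero_zero C).eq_of_src _ _)
  · rintro X Y ⟨hXCc, hXD⟩ ⟨hYCc, hYD⟩
    exact ⟨hmemCc (fun Y' hY' => ext1Zero_biprod hS (horth _ hXCc _ hY') (horth _ hYCc _ hY')),
      htor.2 (conf_inl_snd hS X Y) hXD hYD⟩
  · rintro X Z ⟨hZCc, hZD⟩ i r hir
    exact ⟨hCcSum hZCc i r hir, htor.1 r hZD (retraction_deflation hS hW hir)⟩
  · rintro T1 ⟨hT1Cc, -⟩ T2 ⟨-, hT2D⟩ n
    cases n with
    | zero => exact ext1ZeroRel_of (horth T1 hT1Cc T2 hT2D)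
    | succ m =>
      intro K P i p hK hPrel hconf
      exact extSucc_of_extProj hS m K (hsyz hT1Cc hPrel hconf) T2
  · rintro T' ⟨hT'Cc, -⟩ Y K P i p hK hPrel hconf
    exact ext1ZeroRel_of (hsyz hT'Cc hPrel hconf Y)
  · intro P hPproj
    obtain ⟨D1P, C1P, jP, qP, hD1P, hC1P, hconfP⟩ := hcompl2 P
    refine ⟨D1P, C1P, jP, qP,
      ⟨hmemCc (fun Y hY => ext1Zero_ext hS hconfP (projObj_ext1Zero hPproj Y)
        (horth C1P hC1P Y hY)), hD1P⟩,
      ⟨hC1P, htor.1 qP hD1P ⟨_, _, hconfP⟩⟩, hconfP⟩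

end Part4

end Machinery

end ConflationStruct
end TauTilting

namespace TauTilting

/-- mutually inverse bijections between support τ-tilting subcategories
and τ-cotorsion pairs `(C, D)` with `D` a torsion class, restricting to bijections
between tilting subcategories and cotorsion pairs `(C, D)` with `D` a torsion class. -/
theorem bijection_support_tau_tilting_tau_cotorsion
    {C : Type u} [Category.{v} C] [Preadditive C] [HasZeroObject C] [HasBinaryBiproducts C]
    (S : ConflationStruct C) (hS : S.IsExactStructure) (hP : S.HasEnoughProjectives)
    (hWIC : WeaklyIdempotentComplete C) :
    (∀ T : Set C, S.IsSupportTauTilting T →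
        S.IsTauCotorsionPair (S.perp1 (S.Fac T)) (S.Fac T) ∧
        S.IsTorsionClass (S.Fac T) ∧
        S.perp1 (S.Fac T) ∩ S.Fac T = T) ∧
    (∀ Cc D : Set C, S.IsTauCotorsionPair Cc D → S.IsTorsionClass D →
        S.IsSupportTauTilting (Cc ∩ D) ∧
        S.Fac (Cc ∩ D) = D ∧ S.perp1 (S.Fac (Cc ∩ D)) = Cc) ∧
    (∀ T : Set C, S.IsTilting T →
        S.IsCotorsionPair (S.perp1 (S.Fac T)) (S.Fac T) ∧
        S.IsTorsionClass (S.Fac T) ∧ S.perp1 (S.Fac T) ∩ S.Fac T = T) ∧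
    (∀ Cc D : Set C, S.IsCotorsionPair Cc D → S.IsTorsionClass D →
        S.IsTilting (Cc ∩ D) ∧ S.Fac (Cc ∩ D) = D ∧ S.perp1 (S.Fac (Cc ∩ D)) = Cc) := by
  refine ⟨?_, ?_, ?_, ?_⟩
  · intro T hsτ
    exact ⟨ConflationStruct.sτ_taucotorsion hS hsτ, ConflationStruct.fac_torsion hS hsτ.1,
      ConflationStruct.perp1_fac_inter hS hWIC hP hsτ⟩
  · intro Cc D hCD htor
    exact ConflationStruct.taucot_to_sτ hS hWIC hP hCD htor
  · intro T hTtilt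
    have hsτ := ConflationStruct.tilting_sτ hS hP hTtilt
    exact ⟨ConflationStruct.tilting_cotorsion hS hWIC hP hTtilt,
      ConflationStruct.fac_torsion hS hsτ.1, ConflationStruct.perp1_fac_inter hS hWIC hP hsτ⟩
  · intro Cc D hCP htor
    exact ConflationStruct.cot_to_tilting hS hWIC hP hCP htor

end TauTilting
end

section
/- Let E be a skeletally small weakly idempotent complete exact category with enough projectives P and let T be a subcategory of E satisfying condition (A). Then E_T = (A_T, S_T) is an exact category, and it has enough projectives given by P_T = add{Im f | Q ∈ P and f: Q → T' is an admissible left T-approximation with T' ∈ T}. -/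
open CategoryTheory CategoryTheory.Limits ZeroObject

namespace TauTilting
section Helpers

variable {C : Type u} [Category.{v} C] [Preadditive C] {S : ConflationStruct C}

lemma confl_comp_zero (hS : S.IsExactStructure) {X Y Z : C} {f : X ⟶ Y} {g : Y ⟶ Z}
    (h : S.IsConflation f g) : f ≫ g = 0 :=
  (hS.ker_coker h).choose

lemma mono_of_inflation (hS : S.IsExactStructure) {X Y : C} {f : X ⟶ Y}
    (hf : S.IsInflation f) : Mono f := by
  obtain ⟨Z, g, h⟩ := hf
  obtain ⟨w, ⟨hl⟩, -⟩ := hS.ker_coker h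
  refine ⟨fun {W} u v huv => Fork.IsLimit.hom_ext hl ?_⟩
  simpa using huv

lemma epi_of_deflation (hS : S.IsExactStructure) {Y Z : C} {g : Y ⟶ Z}
    (hg : S.IsDeflation g) : Epi g := by
  obtain ⟨X, f, h⟩ := hg
  obtain ⟨w, -, ⟨hc⟩⟩ := hS.ker_coker h
  refine ⟨fun {W} u v huv => Cofork.IsColimit.hom_ext hc ?_⟩
  simpa using huv

lemma ker_fac (hS : S.IsExactStructure) {X Y Z : C} {f : X ⟶ Y} {g : Y ⟶ Z}
    (h : S.IsConflation f g) {W : C} (t : W ⟶ Y) (ht : t ≫ g = 0) :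
    ∃ u : W ⟶ X, u ≫ f = t := by
  obtain ⟨w, ⟨hl⟩, -⟩ := hS.ker_coker h
  obtain ⟨l, hl'⟩ := KernelFork.IsLimit.lift' hl t ht
  exact ⟨l, by simpa using hl'⟩

lemma coker_fac (hS : S.IsExactStructure) {X Y Z : C} {f : X ⟶ Y} {g : Y ⟶ Z}
    (h : S.IsConflation f g) {W : C} (t : Y ⟶ W) (ht : f ≫ t = 0) :
    ∃ u : Z ⟶ W, g ≫ u = t := by
  obtain ⟨w, -, ⟨hc⟩⟩ := hS.ker_coker h
  obtain ⟨l, hl'⟩ := CokernelCofork.IsColimit.desc' hc t ht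
  exact ⟨l, by simpa using hl'⟩

lemma confl_mid_iso (hS : S.IsExactStructure) {X Y Y' Z : C} {f : X ⟶ Y} {g : Y ⟶ Z}
    (h : S.IsConflation f g) (e : Y ≅ Y') : S.IsConflation (f ≫ e.hom) (e.inv ≫ g) := by
  have := hS.iso_closed (Iso.refl X) e.symm (Iso.refl Z) h
  simpa using this

lemma confl_src_iso (hS : S.IsExactStructure) {X X' Y Z : C} {f : X ⟶ Y} {g : Y ⟶ Z}
    (h : S.IsConflation f g) (e : X' ≅ X) : S.IsConflation (e.hom ≫ f) g := by
  have := hS.iso_closed e (Iso.refl Y) (Iso.refl Z) h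
  simpa using this

lemma confl_tgt_iso (hS : S.IsExactStructure) {X Y Z Z' : C} {f : X ⟶ Y} {g : Y ⟶ Z}
    (h : S.IsConflation f g) (e : Z ≅ Z') : S.IsConflation f (g ≫ e.hom) := by
  have := hS.iso_closed (Iso.refl X) (Iso.refl Y) e.symm h
  simpa using this

lemma inflation_of_iso (hS : S.IsExactStructure) {X Y : C} (e : X ≅ Y) :
    S.IsInflation e.hom := by
  obtain ⟨Z, g, h⟩ := hS.id_inflation X
  have := confl_mid_iso hS h e
  rw [Category.id_comp] at this
  exact ⟨Z, e.inv ≫ g, this⟩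

lemma deflation_of_iso (hS : S.IsExactStructure) {X Y : C} (e : X ≅ Y) :
    S.IsDeflation e.hom := by
  obtain ⟨Z, g, h⟩ := hS.id_deflation Y
  have := confl_mid_iso hS h e.symm
  exact ⟨Z, g ≫ e.inv, by simpa using this⟩

lemma confl_ker_replace (hS : S.IsExactStructure) {M Y Z W : C} {m : M ⟶ Y} {D : Y ⟶ Z}
    (h : S.IsConflation m D) {μ : W ⟶ Y} (hμ : μ ≫ D = 0)
    (hlim : IsLimit (KernelFork.ofι μ hμ)) : S.IsConflation μ D := by
  obtain ⟨w, ⟨hl⟩, -⟩ := hS.ker_coker h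
  have he : (hlim.conePointUniqueUpToIso hl).hom ≫ m = μ := by
    have := hlim.conePointUniqueUpToIso_hom_comp hl WalkingParallelPair.zero
    simpa using this
  have := confl_src_iso hS h (hlim.conePointUniqueUpToIso hl)
  rwa [he] at this

lemma confl_coker_replace (hS : S.IsExactStructure) {X Y V Q : C} {f : X ⟶ Y} {c : Y ⟶ V}
    (h : S.IsConflation f c) {q : Y ⟶ Q} (hq : f ≫ q = 0)
    (hcolim : IsColimit (CokernelCofork.ofπ q hq)) : S.IsConflation f q := by
  obtain ⟨w, -, ⟨hc⟩⟩ := hS.ker_coker h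
  have he : c ≫ (hc.coconePointUniqueUpToIso hcolim).hom = q := by
    have := hc.comp_coconePointUniqueUpToIso_hom hcolim WalkingParallelPair.one
    simpa using this
  have := confl_tgt_iso hS h (hc.coconePointUniqueUpToIso hcolim)
  rwa [he] at this

end Helpers
set_option linter.unusedSectionVars false

section Split

variable {C : Type u} [Category.{v} C] [Preadditive C] [HasZeroObject C]
  [HasBinaryBiproducts C] {S : ConflationStruct C}

lemma isZero_of_confl_id (hS : S.IsExactStructure) {K Y : C} {k : K ⟶ Y}
    (h : S.IsConflation k (𝟙 Y)) : IsZero K := by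
  have hk : k = 0 := by simpa using confl_comp_zero hS h
  have : Mono k := mono_of_inflation hS ⟨_, _, h⟩
  have h1 : 𝟙 K = 0 := by
    rw [← cancel_mono k]; simp [hk]
  exact IsZero.of_iso (isZero_zero C) ⟨0, 0, by simp [h1], by simp⟩

lemma inflation_zero_from (hS : S.IsExactStructure) (X : C) :
    S.IsInflation (0 : (0 : C) ⟶ X) := by
  obtain ⟨K, k, h⟩ := hS.id_deflation X
  have hK : IsZero K := isZero_of_confl_id hS h
  have e : (0 : C) ≅ K := (isZero_zero C).iso hK
  have := confl_src_iso hS h e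
  have h0 : e.hom ≫ k = 0 := (isZero_zero C).eq_of_src _ _
  rw [h0] at this
  exact ⟨_, _, this⟩

lemma biprod_isPushout (A B : C) :
    IsPushout (0 : (0 : C) ⟶ A) (0 : (0 : C) ⟶ B)
      (biprod.inl : A ⟶ A ⊞ B) (biprod.inr : B ⟶ A ⊞ B) := by
  refine IsPushout.of_isColimit (c := PushoutCocone.mk biprod.inl biprod.inr (by simp)) ?_
  refine PushoutCocone.IsColimit.mk _ (fun s => biprod.desc s.inl s.inr) (fun s => by simp)
    (fun s => by simp) (fun s m h1 h2 => ?_)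
  apply biprod.hom_ext' <;> simp [h1, h2]

lemma biprod_isPushout' (A B : C) :
    IsPushout (0 : (0 : C) ⟶ A) (0 : (0 : C) ⟶ B)
      (biprod.inr : A ⟶ B ⊞ A) (biprod.inl : B ⟶ B ⊞ A) := by
  refine IsPushout.of_isColimit (c := PushoutCocone.mk biprod.inr biprod.inl (by simp)) ?_
  refine PushoutCocone.IsColimit.mk _ (fun s => biprod.desc s.inr s.inl) (fun s => by simp)
    (fun s => by simp) (fun s m h1 h2 => ?_)
  apply biprod.hom_ext' <;> simp [h1, h2]

/-- Transport an inflation along a comparison of pushouts. -/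
lemma inflation_of_isPushout_comparison (hS : S.IsExactStructure)
    {Z X Y P P' : C} {f : Z ⟶ X} {g : Z ⟶ Y} {a : X ⟶ P} {b : Y ⟶ P}
    {a' : X ⟶ P'} {b' : Y ⟶ P'}
    (h1 : IsPushout f g a b) (h2 : IsPushout f g a' b')
    (hb : S.IsInflation b) : S.IsInflation b' := by
  obtain ⟨V, c, hc⟩ := hb
  have he : b ≫ (h1.isoIsPushout _ _ h2).hom = b' :=
    h1.inr_isoIsPushout_hom _ _ h2
  have := confl_mid_iso hS hc (h1.isoIsPushout _ _ h2)
  rw [he] at this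
  exact ⟨_, _, this⟩

lemma confl_inl_snd (hS : S.IsExactStructure) (X B : C) :
    S.IsConflation (biprod.inl : X ⟶ X ⊞ B) biprod.snd := by
  obtain ⟨P, h', f', hpo, hinf⟩ :=
    hS.pushout_inflation (0 : (0 : C) ⟶ B) (0 : (0 : C) ⟶ X) (inflation_zero_from hS B)
  have hinl : S.IsInflation (biprod.inl : X ⟶ X ⊞ B) :=
    inflation_of_isPushout_comparison hS hpo (biprod_isPushout' B X) hinf
  obtain ⟨V, c, hc⟩ := hinl
  have h0 : (biprod.inl : X ⟶ X ⊞ B) ≫ biprod.snd = 0 := by simp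
  refine confl_coker_replace hS hc h0 ?_
  refine CokernelCofork.IsColimit.ofπ _ _ (fun g' eq' => biprod.inr ≫ g')
    (fun g' eq' => ?_) (fun g' eq' m hm => by simp [← hm])
  apply biprod.hom_ext' <;> simp [eq']

lemma confl_inr_fst (hS : S.IsExactStructure) (A X : C) :
    S.IsConflation (biprod.inr : X ⟶ A ⊞ X) biprod.fst := by
  obtain ⟨P, h', f', hpo, hinf⟩ :=
    hS.pushout_inflation (0 : (0 : C) ⟶ A) (0 : (0 : C) ⟶ X) (inflation_zero_from hS A)
  have hinr : S.IsInflation (biprod.inr : X ⟶ A ⊞ X) :=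
    inflation_of_isPushout_comparison hS hpo (biprod_isPushout A X) hinf
  obtain ⟨V, c, hc⟩ := hinr
  have h0 : (biprod.inr : X ⟶ A ⊞ X) ≫ biprod.fst = 0 := by simp
  refine confl_coker_replace hS hc h0 ?_
  refine CokernelCofork.IsColimit.ofπ _ _ (fun g' eq' => biprod.inl ≫ g')
    (fun g' eq' => ?_) (fun g' eq' m hm => by simp [← hm])
  apply biprod.hom_ext' <;> simp [eq']

lemma deflation_snd (hS : S.IsExactStructure) (X B : C) :
    S.IsDeflation (biprod.snd : X ⊞ B ⟶ B) := ⟨_, _, confl_inl_snd hS X B⟩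

lemma deflation_fst (hS : S.IsExactStructure) (A X : C) :
    S.IsDeflation (biprod.fst : A ⊞ X ⟶ A) := ⟨_, _, confl_inr_fst hS A X⟩

lemma deflation_desc_id (hS : S.IsExactStructure) {B K : C} (φ : B ⟶ K) :
    S.IsDeflation (biprod.desc φ (𝟙 K) : B ⊞ K ⟶ K) := by
  set a : B ⊞ K ⟶ B ⊞ K := biprod.fst ≫ φ ≫ (biprod.inr : K ⟶ B ⊞ K) with ha_def
  have ha : a ≫ a = 0 := by simp [ha_def]
  have h1 : (𝟙 (B ⊞ K) + a) ≫ (𝟙 (B ⊞ K) - a) = 𝟙 _ := by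
    simp only [Preadditive.comp_sub, Preadditive.add_comp, Category.comp_id, Category.id_comp, ha]; abel
  have h2 : (𝟙 (B ⊞ K) - a) ≫ (𝟙 (B ⊞ K) + a) = 𝟙 _ := by
    simp only [Preadditive.comp_add, Preadditive.sub_comp, Category.comp_id, Category.id_comp, ha]; abel
  have hdesc : (biprod.desc φ (𝟙 K) : B ⊞ K ⟶ K) = (𝟙 (B ⊞ K) + a) ≫ biprod.snd := by
    apply biprod.hom_ext' <;> simp [ha_def]
  rw [hdesc]
  exact hS.deflation_comp (deflation_of_iso hS ⟨𝟙 _ + a, 𝟙 _ - a, h1, h2⟩)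
    (deflation_snd hS B K)

end Split
section PushCfl

variable {C : Type u} [Category.{v} C] [Preadditive C] [HasZeroObject C]
  [HasBinaryBiproducts C] {S : ConflationStruct C}

lemma infl_map_id (hS : S.IsExactStructure) {X Y : C} {x : X ⟶ Y} (hx : S.IsInflation x)
    (W : C) : S.IsInflation (biprod.map x (𝟙 W) : X ⊞ W ⟶ Y ⊞ W) := by
  have hcomm : x ≫ (biprod.inl : Y ⟶ Y ⊞ W) =
      (biprod.inl : X ⟶ X ⊞ W) ≫ biprod.map x (𝟙 W) := by simp
  have hmodel : IsPushout x (biprod.inl : X ⟶ X ⊞ W) (biprod.inl : Y ⟶ Y ⊞ W)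
      (biprod.map x (𝟙 W)) := by
    refine IsPushout.of_isColimit
      (c := PushoutCocone.mk (biprod.inl : Y ⟶ Y ⊞ W) (biprod.map x (𝟙 W)) hcomm) ?_
    refine PushoutCocone.IsColimit.mk _
      (fun s => biprod.desc s.inl (biprod.inr ≫ s.inr)) (fun s => by simp)
      (fun s => ?_) (fun s m h1 h2 => ?_)
    · apply biprod.hom_ext'
      · simpa using s.condition
      · simp
    · apply biprod.hom_ext'
      · simpa using h1
      · have h3 : (biprod.inr : W ⟶ X ⊞ W) ≫ biprod.map x (𝟙 W) ≫ m =
            (biprod.inr : W ⟶ X ⊞ W) ≫ s.inr := by rw [h2]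
        simpa using h3
  obtain ⟨P, h', f', hpo, hinf⟩ := hS.pushout_inflation x (biprod.inl : X ⟶ X ⊞ W) hx
  exact inflation_of_isPushout_comparison hS hpo hmodel hinf

lemma infl_lift_id_neg (hS : S.IsExactStructure) {X W : C} (u : X ⟶ W) :
    S.IsInflation (biprod.lift (𝟙 X) (-u) : X ⟶ X ⊞ W) := by
  set a : X ⊞ W ⟶ X ⊞ W := biprod.fst ≫ u ≫ (biprod.inr : W ⟶ X ⊞ W) with ha_def
  have ha : a ≫ a = 0 := by simp [ha_def]
  have h1 : (𝟙 (X ⊞ W) - a) ≫ (𝟙 (X ⊞ W) + a) = 𝟙 _ := by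
    simp only [Preadditive.comp_add, Preadditive.sub_comp, Category.comp_id,
      Category.id_comp, ha]; abel
  have h2 : (𝟙 (X ⊞ W) + a) ≫ (𝟙 (X ⊞ W) - a) = 𝟙 _ := by
    simp only [Preadditive.comp_sub, Preadditive.add_comp, Category.comp_id,
      Category.id_comp, ha]; abel
  have hl : (biprod.lift (𝟙 X) (-u) : X ⟶ X ⊞ W) = biprod.inl ≫ (𝟙 (X ⊞ W) - a) := by
    apply biprod.hom_ext <;> simp [ha_def]
  have := confl_mid_iso hS (confl_inl_snd hS X W) (⟨𝟙 _ - a, 𝟙 _ + a, h1, h2⟩ : X ⊞ W ≅ X ⊞ W)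
  rw [← hl] at this
  exact ⟨_, _, this⟩

lemma infl_lift_neg (hS : S.IsExactStructure) {X Y W : C} {x : X ⟶ Y}
    (hx : S.IsInflation x) (u : X ⟶ W) :
    S.IsInflation (biprod.lift x (-u) : X ⟶ Y ⊞ W) := by
  have hc : (biprod.lift x (-u) : X ⟶ Y ⊞ W) =
      biprod.lift (𝟙 X) (-u) ≫ biprod.map x (𝟙 W) := by
    apply biprod.hom_ext <;> simp
  rw [hc]
  exact hS.inflation_comp (infl_lift_id_neg hS u) (infl_map_id hS hx W)

/-- Pushing out a conflation along an arbitrary morphism. -/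
lemma pushout_conflation (hS : S.IsExactStructure) {X Y Z : C} {x : X ⟶ Y} {z : Y ⟶ Z}
    (h : S.IsConflation x z) {W : C} (u : X ⟶ W) :
    ∃ (P : C) (h' : Y ⟶ P) (f' : W ⟶ P) (q : P ⟶ Z),
      IsPushout x u h' f' ∧ S.IsConflation f' q ∧ h' ≫ q = z ∧
      S.IsDeflation (biprod.desc h' f' : Y ⊞ W ⟶ P) := by
  obtain ⟨P, h', f', hpo, hinf⟩ := hS.pushout_inflation x u ⟨_, _, h⟩
  have hz0 : x ≫ z = 0 := confl_comp_zero hS h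
  have hzepi : Epi z := epi_of_deflation hS ⟨_, _, h⟩
  have hw : x ≫ z = u ≫ (0 : W ⟶ Z) := by rw [hz0, comp_zero]
  set q : P ⟶ Z := hpo.desc z 0 hw with hq_def
  have hq1 : h' ≫ q = z := hpo.inl_desc z 0 hw
  have hq0 : f' ≫ q = 0 := hpo.inr_desc z 0 hw
  -- q is a cokernel of f'
  have hcolim : IsColimit (CokernelCofork.ofπ q hq0) := by
    refine CokernelCofork.IsColimit.ofπ _ _
      (fun {Z'} t ht => (coker_fac hS h (h' ≫ t) (by
        rw [← Category.assoc, hpo.w, Category.assoc, ht, comp_zero])).choose)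
      (fun {Z'} t ht => ?_) (fun {Z'} t ht m hm => ?_)
    · have hs := (coker_fac hS h (h' ≫ t) (by
        rw [← Category.assoc, hpo.w, Category.assoc, ht, comp_zero])).choose_spec
      refine hpo.hom_ext ?_ ?_
      · rw [← Category.assoc, hq1, hs]
      · rw [← Category.assoc, hq0, zero_comp]; exact ht.symm
    · have hs := (coker_fac hS h (h' ≫ t) (by
        rw [← Category.assoc, hpo.w, Category.assoc, ht, comp_zero])).choose_spec
      rw [← cancel_epi z, hs, ← hq1, Category.assoc, hm]
  obtain ⟨V, c, hc⟩ := hinf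
  have hfq : S.IsConflation f' q := confl_coker_replace hS hc hq0 hcolim
  -- the canonical map Y ⊞ W ⟶ P is a deflation
  have hi0 : S.IsInflation (biprod.lift x (-u) : X ⟶ Y ⊞ W) :=
    infl_lift_neg hS ⟨_, _, h⟩ u
  obtain ⟨C₂, c₂, hc₂⟩ := hi0
  have hlift : (biprod.lift x (-u) : X ⟶ Y ⊞ W) = x ≫ biprod.inl - u ≫ biprod.inr := by
    apply biprod.hom_ext <;> simp
  have ht0 : (biprod.lift x (-u) : X ⟶ Y ⊞ W) ≫ biprod.desc h' f' = 0 := by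
    rw [hlift, Preadditive.sub_comp, Category.assoc, Category.assoc]
    simp [hpo.w]
  have hT : IsColimit (CokernelCofork.ofπ (biprod.desc h' f' : Y ⊞ W ⟶ P) ht0) := by
    have key : ∀ {U : C} (e' : Y ⊞ W ⟶ U), (biprod.lift x (-u)) ≫ e' = 0 →
        x ≫ biprod.inl ≫ e' = u ≫ biprod.inr ≫ e' := by
      intro U e' he'
      rw [hlift, Preadditive.sub_comp, Category.assoc, Category.assoc] at he'
      rw [← sub_eq_zero]
      exact he'
    refine CokernelCofork.IsColimit.ofπ _ _
      (fun {U} e' he' => hpo.desc (biprod.inl ≫ e') (biprod.inr ≫ e') (key e' he'))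
      (fun {U} e' he' => ?_) (fun {U} e' he' m hm => ?_)
    · apply biprod.hom_ext'
      · rw [biprod.inl_desc_assoc, hpo.inl_desc]
      · rw [biprod.inr_desc_assoc, hpo.inr_desc]
    · refine hpo.hom_ext ?_ ?_
      · rw [hpo.inl_desc, ← hm, biprod.inl_desc_assoc]
      · rw [hpo.inr_desc, ← hm, biprod.inr_desc_assoc]
  have hdefl : S.IsConflation (biprod.lift x (-u) : X ⟶ Y ⊞ W) (biprod.desc h' f') :=
    confl_coker_replace hS hc₂ ht0 hT
  exact ⟨P, h', f', q, hpo, hfq, hq1, ⟨_, _, hdefl⟩⟩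

end PushCfl
section Obscure

variable {C : Type u} [Category.{v} C] [Preadditive C] {S : ConflationStruct C}

noncomputable def cokernelOfFac {X Y Q : C} {f : X ⟶ Y} {π : Y ⟶ Q} (hfπ : f ≫ π = 0) (hepi : Epi π)
    (fac : ∀ {U : C} (t : Y ⟶ U), f ≫ t = 0 → ∃ s : Q ⟶ U, π ≫ s = t) :
    IsColimit (CokernelCofork.ofπ π hfπ) := by
  refine CokernelCofork.IsColimit.ofπ _ _ (fun {U} t ht => (fac t ht).choose)
    (fun {U} t ht => (fac t ht).choose_spec) (fun {U} t ht m hm => ?_)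
  rw [← cancel_epi π, hm, (fac t ht).choose_spec]

noncomputable def kernelOfFac {X Y Q : C} {f : X ⟶ Y} {ι : Q ⟶ X} (hιf : ι ≫ f = 0) (hmono : Mono ι)
    (fac : ∀ {U : C} (t : U ⟶ X), t ≫ f = 0 → ∃ s : U ⟶ Q, s ≫ ι = t) :
    IsLimit (KernelFork.ofι ι hιf) := by
  refine KernelFork.IsLimit.ofι _ _ (fun {U} t ht => (fac t ht).choose)
    (fun {U} t ht => (fac t ht).choose_spec) (fun {U} t ht m hm => ?_)
  rw [← cancel_mono ι, hm, (fac t ht).choose_spec]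

end Obscure

section Obscure2

variable {C : Type u} [Category.{v} C] [Preadditive C] [HasZeroObject C]
  [HasBinaryBiproducts C] {S : ConflationStruct C}

lemma wic_retraction_conflation (hS : S.IsExactStructure)
    (hWIC : WeaklyIdempotentComplete C) {A W : C} {h' : W ⟶ A} {t : A ⟶ W}
    (ht : t ≫ h' = 𝟙 A) : ∃ (V : C) (k : V ⟶ W), S.IsConflation k h' := by
  have : HasCokernel t := hWIC t ⟨h', ht⟩
  have hte : t ≫ (𝟙 W - h' ≫ t) = 0 := by
    rw [Preadditive.comp_sub, Category.comp_id, ← Category.assoc, ht, Category.id_comp,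
      sub_self]
  set k : cokernel t ⟶ W := cokernel.desc t (𝟙 W - h' ≫ t) hte with hk_def
  have hck : cokernel.π t ≫ k = 𝟙 W - h' ≫ t := cokernel.π_desc _ _ _
  have htc : t ≫ cokernel.π t = 0 := cokernel.condition t
  have hkh : k ≫ h' = 0 := by
    rw [← cancel_epi (cokernel.π t), ← Category.assoc, hck, comp_zero,
      Preadditive.sub_comp, Category.id_comp, Category.assoc, ht, Category.comp_id,
      sub_self]
  have hkc : k ≫ cokernel.π t = 𝟙 (cokernel t) := by
    rw [← cancel_epi (cokernel.π t), ← Category.assoc, hck, Category.comp_id,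
      Preadditive.sub_comp, Category.id_comp, Category.assoc, htc, comp_zero, sub_zero]
  have hhom_inv : (biprod.desc t k : A ⊞ cokernel t ⟶ W) ≫ biprod.lift h' (cokernel.π t) =
      𝟙 _ := by
    apply biprod.hom_ext' <;> apply biprod.hom_ext <;> simp [ht, htc, hkh, hkc]
  have hinv_hom : (biprod.lift h' (cokernel.π t) : W ⟶ A ⊞ cokernel t) ≫ biprod.desc t k =
      𝟙 W := by
    rw [biprod.lift_desc, hck]; abel
  have hconf := confl_mid_iso hS (confl_inr_fst hS A (cokernel t))
    (⟨biprod.desc t k, biprod.lift h' (cokernel.π t), hhom_inv, hinv_hom⟩ :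
      (A ⊞ cokernel t) ≅ W)
  have e1 : (biprod.inr : cokernel t ⟶ A ⊞ cokernel t) ≫ biprod.desc t k = k := by simp
  have e2 : (biprod.lift h' (cokernel.π t) : W ⟶ A ⊞ cokernel t) ≫ biprod.fst = h' := by
    simp
  rw [e1, e2] at hconf
  exact ⟨_, _, hconf⟩

lemma deflation_cancel_of_kernel (hS : S.IsExactStructure) {A B D : C} (f : A ⟶ B)
    {g : B ⟶ D} {K : C} {k : K ⟶ B} (hk0 : k ≫ g = 0)
    (hlim : IsLimit (KernelFork.ofι k hk0)) (hfg : S.IsDeflation (f ≫ g)) :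
    S.IsConflation k g := by
  have hkmono : Mono k := by
    refine ⟨fun {U} a b hab => Fork.IsLimit.hom_ext hlim ?_⟩; simpa using hab
  -- (a) the square (A⊞K, fst, desc f k) is a pullback of (f≫g, g)
  have hwsq : (biprod.fst : A ⊞ K ⟶ A) ≫ (f ≫ g) = biprod.desc f k ≫ g := by
    apply biprod.hom_ext' <;> simp [hk0]
  have hPB : IsPullback (biprod.fst : A ⊞ K ⟶ A) (biprod.desc f k) (f ≫ g) g := by
    refine IsPullback.of_isLimit (c := PullbackCone.mk biprod.fst (biprod.desc f k) hwsq) ?_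
    have hzero : ∀ (s : PullbackCone (f ≫ g) g), (s.snd - s.fst ≫ f) ≫ g = 0 := by
      intro s
      rw [Preadditive.sub_comp, Category.assoc, ← s.condition, sub_self]
    refine PullbackCone.IsLimit.mk _ (fun s => biprod.lift s.fst
        (KernelFork.IsLimit.lift' hlim (s.snd - s.fst ≫ f) (hzero s)).1)
      (fun s => by simp) (fun s => ?_) (fun s m h1 h2 => ?_)
    · have hτ := (KernelFork.IsLimit.lift' hlim (s.snd - s.fst ≫ f) (hzero s)).2
      simp only [Fork.ι_ofι] at hτ
      rw [biprod.lift_desc, hτ]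
      abel
    · apply biprod.hom_ext
      · simpa using h1
      · have hτ := (KernelFork.IsLimit.lift' hlim (s.snd - s.fst ≫ f) (hzero s)).2
        simp only [Fork.ι_ofι] at hτ
        rw [← cancel_mono k, Category.assoc, biprod.lift_snd, hτ]
        have hdesc : (biprod.desc f k : A ⊞ K ⟶ B) = biprod.fst ≫ f + biprod.snd ≫ k := by
          apply biprod.hom_ext' <;> simp
        rw [hdesc, Preadditive.comp_add, ← Category.assoc, ← Category.assoc, h1] at h2
        rw [← Category.assoc, eq_sub_iff_add_eq,
          add_comm ((m ≫ biprod.snd) ≫ k) (s.fst ≫ f)]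
        exact h2
  -- (b) desc f k is a deflation
  obtain ⟨W₂, h₂, g₂, hpb₂, hg₂⟩ := hS.pullback_deflation (f ≫ g) g hfg
  obtain ⟨V₂, b₂, hb₂⟩ := hg₂
  have hcompare : (hPB.isoIsPullback _ _ hpb₂).hom ≫ g₂ =
      biprod.desc f k := by
    exact hPB.isoIsPullback_hom_snd _ _ hpb₂
  have hD : S.IsConflation
      (b₂ ≫ (hPB.isoIsPullback _ _ hpb₂).inv) (biprod.desc f k) := by
    have := confl_mid_iso hS hb₂ (hPB.isoIsPullback _ _ hpb₂).symm
    simpa [hcompare] using this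
  set m := b₂ ≫ (hPB.isoIsPullback _ _ hpb₂).inv with hm_def
  clear_value m
  clear hcompare hb₂
  have hmmono : Mono m := mono_of_inflation hS ⟨_, _, hD⟩
  have hmD : m ≫ biprod.desc f k = 0 := confl_comp_zero hS hD
  have hDdefl : S.IsDeflation (biprod.desc f k : A ⊞ K ⟶ B) := ⟨_, _, hD⟩
  have hDepi : Epi (biprod.desc f k : A ⊞ K ⟶ B) := epi_of_deflation hS hDdefl
  -- (c) v := fst ≫ (f ≫ g) is a deflation
  have hv : S.IsDeflation (biprod.fst ≫ (f ≫ g) : A ⊞ K ⟶ D) :=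
    hS.deflation_comp (deflation_fst hS A K) hfg
  have hvepi : Epi (biprod.fst ≫ (f ≫ g) : A ⊞ K ⟶ D) := epi_of_deflation hS hv
  -- (d) conflation (biprod.map m₀ 𝟙, v)
  obtain ⟨M₀, m₀, hm₀⟩ := hfg
  have hm₀fg : m₀ ≫ (f ≫ g) = 0 := confl_comp_zero hS hm₀
  obtain ⟨C₅, c₅, hc₅⟩ := infl_map_id hS ⟨_, _, hm₀⟩ K
  have hnv : (biprod.map m₀ (𝟙 K) : M₀ ⊞ K ⟶ A ⊞ K) ≫ (biprod.fst ≫ (f ≫ g)) = 0 := by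
    rw [biprod.map_fst_assoc, hm₀fg, comp_zero]
  have hconfl_nv : S.IsConflation (biprod.map m₀ (𝟙 K) : M₀ ⊞ K ⟶ A ⊞ K)
      (biprod.fst ≫ (f ≫ g)) := by
    refine confl_coker_replace hS hc₅ hnv (cokernelOfFac hnv hvepi ?_)
    intro U t ht
    have h1 : m₀ ≫ biprod.inl ≫ t = 0 := by
      have := biprod.inl ≫= ht
      simpa using this
    have h2 : (biprod.inr : K ⟶ A ⊞ K) ≫ t = 0 := by
      have := biprod.inr ≫= ht
      simpa using this
    obtain ⟨τ, hτ⟩ := coker_fac hS hm₀ (biprod.inl ≫ t) h1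
    refine ⟨τ, ?_⟩
    apply biprod.hom_ext'
    · simpa using hτ
    · simpa using h2.symm
  have hnmono : Mono (biprod.map m₀ (𝟙 K) : M₀ ⊞ K ⟶ A ⊞ K) :=
    mono_of_inflation hS ⟨_, _, hconfl_nv⟩
  -- φ and the retraction c₄
  obtain ⟨φ, hφ⟩ : ∃ φ : M₀ ⟶ K, φ ≫ k = m₀ ≫ f := by
    obtain ⟨l, hl⟩ := KernelFork.IsLimit.lift' hlim (m₀ ≫ f) (by
      rw [Category.assoc, hm₀fg])
    exact ⟨l, by simpa using hl⟩
  have hkey : (biprod.map m₀ (𝟙 K) : M₀ ⊞ K ⟶ A ⊞ K) ≫ biprod.desc f k =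
      biprod.desc φ (𝟙 K) ≫ k := by
    apply biprod.hom_ext' <;> simp [hφ]
  have hc₄defl : S.IsDeflation (biprod.desc φ (𝟙 K) : M₀ ⊞ K ⟶ K) := deflation_desc_id hS φ
  have hc₄epi : Epi (biprod.desc φ (𝟙 K) : M₀ ⊞ K ⟶ K) := epi_of_deflation hS hc₄defl
  -- jj
  obtain ⟨jj, hjj⟩ := ker_fac hS hconfl_nv m (by
    have : m ≫ (biprod.desc f k ≫ g) = 0 := by rw [← Category.assoc, hmD, zero_comp]
    rwa [← hwsq] at this)
  have hjjc₄ : jj ≫ biprod.desc φ (𝟙 K) = 0 := by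
    rw [← cancel_mono k, Category.assoc, ← hkey, ← Category.assoc, hjj, hmD, zero_comp]
  have hjjmono : Mono jj := by
    refine ⟨fun {U} a b hab => ?_⟩
    have : a ≫ m = b ≫ m := by rw [← hjj, ← Category.assoc, ← Category.assoc, hab]
    exact (cancel_mono m).1 this
  have hconfl_jj : S.IsConflation jj (biprod.desc φ (𝟙 K)) := by
    obtain ⟨Kc, mc, hmc⟩ := hc₄defl
    refine confl_ker_replace hS hmc hjjc₄ (kernelOfFac hjjc₄ hjjmono ?_)
    intro U t ht
    have h1 : (t ≫ biprod.map m₀ (𝟙 K)) ≫ biprod.desc f k = 0 := by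
      rw [Category.assoc, hkey, ← Category.assoc, ht, zero_comp]
    obtain ⟨w, hw⟩ := ker_fac hS hD (t ≫ biprod.map m₀ (𝟙 K)) h1
    refine ⟨w, ?_⟩
    rw [← cancel_mono (biprod.map m₀ (𝟙 K)), Category.assoc, hjj, hw]
  -- push out the conflation (n, v) along c₄
  obtain ⟨P₃, h₃, f₃, q₃, hpo₃, hc₃, hq₃, -⟩ :=
    pushout_conflation hS hconfl_nv (biprod.desc φ (𝟙 K))
  -- B is also a pushout of (n, c₄)
  have hmodel : IsPushout (biprod.map m₀ (𝟙 K) : M₀ ⊞ K ⟶ A ⊞ K) (biprod.desc φ (𝟙 K))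
      (biprod.desc f k) k := by
    refine IsPushout.of_isColimit (c := PushoutCocone.mk (biprod.desc f k) k hkey) ?_
    have hfac : ∀ (s : PushoutCocone (biprod.map m₀ (𝟙 K)) (biprod.desc φ (𝟙 K))),
        m ≫ s.inl = 0 := by
      intro s
      rw [← hjj, Category.assoc, s.condition, ← Category.assoc, hjjc₄, zero_comp]
    refine PushoutCocone.IsColimit.mk _
      (fun s => (coker_fac hS hD s.inl (hfac s)).choose)
      (fun s => (coker_fac hS hD s.inl (hfac s)).choose_spec) (fun s => ?_)
      (fun s m' hm1 hm2 => ?_)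
    · rw [← cancel_epi (biprod.desc φ (𝟙 K)), ← Category.assoc, ← hkey, Category.assoc,
        (coker_fac hS hD s.inl (hfac s)).choose_spec, s.condition]
    · rw [← cancel_epi (biprod.desc f k), hm1, (coker_fac hS hD s.inl (hfac s)).choose_spec]
  have hcomp_l : h₃ ≫ (hpo₃.isoIsPushout _ _ hmodel).hom =
      biprod.desc f k := by
    exact hpo₃.inl_isoIsPushout_hom _ _ hmodel
  have hcomp_r : f₃ ≫ (hpo₃.isoIsPushout _ _ hmodel).hom = k := by
    exact hpo₃.inr_isoIsPushout_hom _ _ hmodel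
  have hfinal := confl_mid_iso hS hc₃
    (hpo₃.isoIsPushout _ _ hmodel)
  rw [hcomp_r] at hfinal
  have hinv : biprod.desc f k ≫ (hpo₃.isoIsPushout _ _ hmodel).inv = h₃ := by
    rw [Iso.comp_inv_eq]; exact hcomp_l.symm
  have hlast : (hpo₃.isoIsPushout _ _ hmodel).inv ≫ q₃ = g := by
    rw [← cancel_epi (biprod.desc f k), ← Category.assoc, hinv, hq₃, hwsq]
  rwa [hlast] at hfinal

/-- Bühler's Proposition 7.6: in a weakly idempotent complete exact category,
if `f ≫ g` is a deflation then so is `g`. -/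
lemma deflation_cancel (hS : S.IsExactStructure) (hWIC : WeaklyIdempotentComplete C)
    {A B D : C} {f : A ⟶ B} {g : B ⟶ D} (hfg : S.IsDeflation (f ≫ g)) :
    S.IsDeflation g := by
  obtain ⟨W, h', g', hpb, hg'⟩ := hS.pullback_deflation (f ≫ g) g hfg
  have hw : (𝟙 A) ≫ (f ≫ g) = f ≫ g := by simp
  have ht1 : hpb.lift (𝟙 A) f hw ≫ h' = 𝟙 A := hpb.lift_fst _ _ _
  obtain ⟨V, ee, hee⟩ := wic_retraction_conflation hS hWIC ht1
  have heeh : ee ≫ h' = 0 := confl_comp_zero hS hee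
  have heemono : Mono ee := mono_of_inflation hS ⟨_, _, hee⟩
  have hk0 : (ee ≫ g') ≫ g = 0 := by
    rw [Category.assoc, ← hpb.w, ← Category.assoc, heeh, zero_comp]
  have hkmono : Mono (ee ≫ g') := by
    refine ⟨fun {U} a b hab => ?_⟩
    have h2 : (a ≫ ee) ≫ g' = (b ≫ ee) ≫ g' := by
      rw [Category.assoc, Category.assoc, hab]
    have h1 : (a ≫ ee) ≫ h' = (b ≫ ee) ≫ h' := by
      rw [Category.assoc, Category.assoc, heeh, comp_zero, comp_zero]
    exact (cancel_mono ee).1 (hpb.hom_ext h1 h2)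
  have hlim : IsLimit (KernelFork.ofι (ee ≫ g') hk0) := by
    refine kernelOfFac hk0 hkmono ?_
    intro U t ht
    have hw' : (0 : U ⟶ A) ≫ (f ≫ g) = t ≫ g := by rw [zero_comp, ht]
    have hl1 : hpb.lift 0 t hw' ≫ h' = 0 := hpb.lift_fst _ _ _
    have hl2 : hpb.lift 0 t hw' ≫ g' = t := hpb.lift_snd _ _ _
    obtain ⟨l, hl⟩ := ker_fac hS hee (hpb.lift 0 t hw') hl1
    exact ⟨l, by rw [← Category.assoc, hl, hl2]⟩
  exact ⟨_, _, deflation_cancel_of_kernel hS f hk0 hlim hfg⟩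

end Obscure2
section ATlemmas

variable {C : Type u} [Category.{v} C] [Preadditive C] {S : ConflationStruct C} {T : Set C}

lemma AT_of_mono {X X' : C} (ι : X' ⟶ X) (hι : Mono ι) (hX : X ∈ S.AT T) :
    X' ∈ S.AT T := by
  intro Q Q' f hf h
  have h0 : (f ≫ h) ≫ ι = 0 ≫ ι := by
    rw [Category.assoc, hX f hf (h ≫ ι), zero_comp]
  exact (cancel_mono ι).1 h0

lemma AT_of_deflation {Y Z : C} {c : Y ⟶ Z} (hc : S.IsDeflation c) (hY : Y ∈ S.AT T) :
    Z ∈ S.AT T := by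
  intro Q Q' f hf h
  obtain ⟨h', hh'⟩ := hf.2.1 c hc h
  rw [← hh', ← Category.assoc, Category.assoc f h' c, ← Category.assoc]
  rw [hY f hf h', zero_comp]

lemma AT_of_isZero {Z : C} (hZ : IsZero Z) : Z ∈ S.AT T :=
  fun _ _ f _ h => hZ.eq_of_tgt _ _

lemma AT_biprod [HasBinaryBiproducts C] {X Y : C} (hX : X ∈ S.AT T) (hY : Y ∈ S.AT T) :
    (X ⊞ Y) ∈ S.AT T := by
  intro Q Q' f hf h
  apply biprod.hom_ext
  · simpa [Category.assoc] using hX f hf (h ≫ biprod.fst)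
  · simpa [Category.assoc] using hY f hf (h ≫ biprod.snd)

lemma AT_biproduct [HasFiniteBiproducts C] {n : ℕ} {f : Fin n → C}
    (hf : ∀ j, f j ∈ S.AT T) : (⨁ f) ∈ S.AT T := by
  intro Q Q' g hg h
  apply biproduct.hom_ext
  intro j
  simpa [Category.assoc] using hf j g hg (h ≫ biproduct.π f j)

lemma AT_of_summand {K M : C} (i : K ⟶ M) (r : M ⟶ K) (hir : i ≫ r = 𝟙 K)
    (hM : M ∈ S.AT T) : K ∈ S.AT T := by
  refine AT_of_mono i ⟨fun {U} a b hab => ?_⟩ hM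
  have := hab =≫ r
  simpa [hir] using this

lemma memIdeal_of_left_approx (hS : S.IsExactStructure) {Q R L K T0 : C}
    (hQ : S.IsProjObj Q) (hR : S.IsProjObj R) {k : L ⟶ Q} {d : Q ⟶ K} {i : K ⟶ T0}
    (hconf : S.IsConflation k d) (happrox : LeftApprox T (d ≫ i)) (π : R ⟶ L) :
    S.memIdeal T (π ≫ k) := by
  refine ⟨hR, hQ, fun T' hT' γ => ?_⟩
  obtain ⟨v, hv⟩ := happrox.2 T' hT' γ
  have hkd : k ≫ d = 0 := confl_comp_zero hS hconf
  rw [← hv]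
  simp only [Category.assoc]
  rw [reassoc_of% hkd]
  simp

lemma AT_kernel_comp_zero (hS : S.IsExactStructure) (hP : S.HasEnoughProjectives)
    {X Q L K T0 : C} (hX : X ∈ S.AT T) (hQ : S.IsProjObj Q) {k : L ⟶ Q} {d : Q ⟶ K}
    {i : K ⟶ T0} (hconf : S.IsConflation k d) (happrox : LeftApprox T (d ≫ i))
    (h : Q ⟶ X) : k ≫ h = 0 := by
  obtain ⟨R, π, hRproj, hπ⟩ := hP L
  have hId := memIdeal_of_left_approx hS hQ hRproj hconf happrox π
  have h0 := hX (π ≫ k) hId h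
  have hepi : Epi π := epi_of_deflation hS hπ
  refine (cancel_epi π).1 ?_
  rw [← Category.assoc, h0, comp_zero]

lemma AT_of_generator (hS : S.IsExactStructure) {Q K T0 : C} (hQ : S.IsProjObj Q)
    {d : Q ⟶ K} {i : K ⟶ T0} (hd : S.IsDeflation d) (hi : S.IsInflation i)
    (happrox : LeftApprox T (d ≫ i)) : K ∈ S.AT T := by
  intro Q₁ Q₁' f hf h
  have himono : Mono i := mono_of_inflation hS hi
  have h0 : f ≫ (h ≫ i) = 0 := hf.2.2 T0 happrox.1 (h ≫ i)
  refine (cancel_mono i).1 ?_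
  rw [Category.assoc, h0, zero_comp]

lemma projRel_lift_of_generator (hS : S.IsExactStructure) (hP : S.HasEnoughProjectives)
    {Q K T0 : C} (hQ : S.IsProjObj Q) {d : Q ⟶ K} {i : K ⟶ T0}
    (hd : S.IsDeflation d) (hi : S.IsInflation i) (happrox : LeftApprox T (d ≫ i))
    {Y Z : C} (g : Y ⟶ Z) (hY : Y ∈ S.AT T) (hg : S.IsDeflation g) (u : K ⟶ Z) :
    ∃ v : K ⟶ Y, v ≫ g = u := by
  obtain ⟨L, k, hconf⟩ := hd
  obtain ⟨w, hw⟩ := hQ g hg (d ≫ u)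
  have hkw : k ≫ w = 0 := by
    obtain ⟨R, π, hRproj, hπ⟩ := hP L
    have hId := memIdeal_of_left_approx hS hQ hRproj hconf happrox π
    have h0 := hY (π ≫ k) hId w
    have hepi : Epi π := epi_of_deflation hS hπ
    refine (cancel_epi π).1 ?_
    rw [← Category.assoc, h0, comp_zero]
  obtain ⟨v, hv⟩ := coker_fac hS hconf w hkw
  refine ⟨v, ?_⟩
  have hepi : Epi d := epi_of_deflation hS ⟨_, _, hconf⟩
  refine (cancel_epi d).1 ?_
  rw [← Category.assoc, hv, hw]

end ATlemmas
section StructOn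

variable {C : Type u} [Category.{v} C] [Preadditive C] {S : ConflationStruct C} {T : Set C}

lemma isZero_of_confl_id' (hS : S.IsExactStructure) {Y Z : C} {g : Y ⟶ Z}
    (h : S.IsConflation (𝟙 Y) g) : IsZero Z := by
  have hg : g = 0 := by simpa using confl_comp_zero hS h
  have : Epi g := epi_of_deflation hS ⟨_, _, h⟩
  refine (IsZero.iff_id_eq_zero Z).2 ?_
  rw [← cancel_epi g]; simp [hg]

/-- View a morphism of a full subcategory as a morphism of the ambient category. -/
def toAmb {D : Set C} {X Y : ObjectProperty.FullSubcategory (fun A : C => A ∈ D)} (f : X ⟶ Y) :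
    X.obj ⟶ Y.obj := f.hom

variable [HasZeroObject C] [HasBinaryBiproducts C]

lemma isPushout_restrict {D : Set C} {X Y Z P : ObjectProperty.FullSubcategory (fun A : C => A ∈ D)}
    {f : X ⟶ Y} {h : X ⟶ Z} {h' : Y ⟶ P} {f' : Z ⟶ P}
    (hpo : IsPushout (toAmb f) (toAmb h) (toAmb h') (toAmb f')) : IsPushout f h h' f' := by
  have w : f ≫ h' = h ≫ f' := ObjectProperty.hom_ext _ hpo.w
  refine IsPushout.of_isColimit (c := PushoutCocone.mk h' f' w) ?_
  refine PushoutCocone.IsColimit.mk _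
    (fun s => ObjectProperty.homMk
      (hpo.desc (toAmb s.inl) (toAmb s.inr) (congrArg (fun φ => φ.hom) s.condition)))
    (fun s => ObjectProperty.hom_ext _ (hpo.inl_desc _ _ _))
    (fun s => ObjectProperty.hom_ext _ (hpo.inr_desc _ _ _)) (fun s m h1 h2 => ?_)
  exact ObjectProperty.hom_ext _ (hpo.hom_ext
    ((congrArg (fun φ => φ.hom) h1).trans (hpo.inl_desc _ _ _).symm)
    ((congrArg (fun φ => φ.hom) h2).trans (hpo.inr_desc _ _ _).symm))

lemma isPullback_restrict {D : Set C} {W X Y Z : ObjectProperty.FullSubcategory (fun A : C => A ∈ D)}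
    {h' : W ⟶ X} {g' : W ⟶ Y} {g : X ⟶ Z} {h : Y ⟶ Z}
    (hpb : IsPullback (toAmb h') (toAmb g') (toAmb g) (toAmb h)) : IsPullback h' g' g h := by
  have w : h' ≫ g = g' ≫ h := ObjectProperty.hom_ext _ hpb.w
  refine IsPullback.of_isLimit (c := PullbackCone.mk h' g' w) ?_
  refine PullbackCone.IsLimit.mk _
    (fun s => ObjectProperty.homMk
      (hpb.lift (toAmb s.fst) (toAmb s.snd) (congrArg (fun φ => φ.hom) s.condition)))
    (fun s => ObjectProperty.hom_ext _ (hpb.lift_fst _ _ _))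
    (fun s => ObjectProperty.hom_ext _ (hpb.lift_snd _ _ _)) (fun s m h1 h2 => ?_)
  exact ObjectProperty.hom_ext _ (hpb.hom_ext
    ((congrArg (fun φ => φ.hom) h1).trans (hpb.lift_fst _ _ _).symm)
    ((congrArg (fun φ => φ.hom) h2).trans (hpb.lift_snd _ _ _).symm))

theorem structOn_AT_isExact (hS : S.IsExactStructure) :
    (S.structOn (S.AT T)).IsExactStructure := by
  constructor
  · -- ker_coker
    intro X Y Z f g hconf
    have hc : S.IsConflation (toAmb f) (toAmb g) := hconf
    have w : f ≫ g = 0 := ObjectProperty.hom_ext _ (confl_comp_zero hS hc)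
    have hmono : Mono (toAmb f) := mono_of_inflation hS ⟨_, _, hc⟩
    have hepi : Epi (toAmb g) := epi_of_deflation hS ⟨_, _, hc⟩
    refine ⟨w, ⟨?_⟩, ⟨?_⟩⟩
    · refine KernelFork.IsLimit.ofι f w
        (fun {W'} g' hg' => ObjectProperty.homMk
          (ker_fac hS hc (toAmb g') (congrArg (fun φ => φ.hom) hg')).choose)
        (fun {W'} g' hg' => ObjectProperty.hom_ext _
          (ker_fac hS hc (toAmb g') (congrArg (fun φ => φ.hom) hg')).choose_spec)
        (fun {W'} g' hg' m hm => ?_)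
      refine ObjectProperty.hom_ext _ ((cancel_mono (toAmb f)).1 ?_)
      exact (congrArg (fun φ => φ.hom) hm).trans
        (ker_fac hS hc (toAmb g') (congrArg (fun φ => φ.hom) hg')).choose_spec.symm
    · refine CokernelCofork.IsColimit.ofπ g w
        (fun {Z'} g' hg' => ObjectProperty.homMk
          (coker_fac hS hc (toAmb g') (congrArg (fun φ => φ.hom) hg')).choose)
        (fun {Z'} g' hg' => ObjectProperty.hom_ext _
          (coker_fac hS hc (toAmb g') (congrArg (fun φ => φ.hom) hg')).choose_spec)
        (fun {Z'} g' hg' m hm => ?_)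
      refine ObjectProperty.hom_ext _ ((cancel_epi (toAmb g)).1 ?_)
      exact (congrArg (fun φ => φ.hom) hm).trans
        (coker_fac hS hc (toAmb g') (congrArg (fun φ => φ.hom) hg')).choose_spec.symm
  · -- iso_closed
    intro X X' Y Y' Z Z' eX eY eZ f g hconf
    exact hS.iso_closed
      (⟨toAmb eX.hom, toAmb eX.inv, ObjectProperty.isoHom_inv_id_hom eX,
          ObjectProperty.isoInv_hom_id_hom eX⟩ : X'.obj ≅ X.obj)
      (⟨toAmb eY.hom, toAmb eY.inv, ObjectProperty.isoHom_inv_id_hom eY,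
          ObjectProperty.isoInv_hom_id_hom eY⟩ : Y'.obj ≅ Y.obj)
      (⟨toAmb eZ.hom, toAmb eZ.inv, ObjectProperty.isoHom_inv_id_hom eZ,
          ObjectProperty.isoInv_hom_id_hom eZ⟩ : Z'.obj ≅ Z.obj) hconf
  · -- id_inflation
    intro X
    obtain ⟨Z₀, g₀, hc⟩ := hS.id_inflation X.obj
    exact ⟨⟨Z₀, AT_of_isZero (isZero_of_confl_id' hS hc)⟩, ObjectProperty.homMk g₀, hc⟩
  · -- id_deflation
    intro X
    obtain ⟨K₀, k₀, hc⟩ := hS.id_deflation X.obj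
    exact ⟨⟨K₀, AT_of_isZero (isZero_of_confl_id hS hc)⟩, ObjectProperty.homMk k₀, hc⟩
  · -- inflation_comp
    intro X Y Z f g hf hg
    obtain ⟨Zf, zf, hzf⟩ := hf
    obtain ⟨Zg, zg, hzg⟩ := hg
    obtain ⟨W, c, hc⟩ := hS.inflation_comp (f := toAmb f) (g := toAmb g)
      ⟨_, _, hzf⟩ ⟨_, _, hzg⟩
    exact ⟨⟨W, AT_of_deflation ⟨_, _, hc⟩ Z.property⟩, ObjectProperty.homMk c, hc⟩
  · -- deflation_comp
    intro X Y Z f g hf hg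
    obtain ⟨Kf, kf, hkf⟩ := hf
    obtain ⟨Kg, kg, hkg⟩ := hg
    obtain ⟨K, c, hc⟩ := hS.deflation_comp (f := toAmb f) (g := toAmb g)
      ⟨_, _, hkf⟩ ⟨_, _, hkg⟩
    exact ⟨⟨K, AT_of_mono c (mono_of_inflation hS ⟨_, _, hc⟩) X.property⟩, ObjectProperty.homMk c, hc⟩
  · -- pushout_inflation
    intro X Y Z f h hf
    obtain ⟨Zc, z, hz⟩ := hf
    obtain ⟨P, h', f', q, hpo, hfq, hq, hT⟩ :=
      pushout_conflation hS (x := toAmb f) (z := toAmb z) hz (toAmb h)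
    have hP : P ∈ S.AT T :=
      AT_of_deflation hT (AT_biprod Y.property Z.property)
    exact ⟨⟨P, hP⟩, ObjectProperty.homMk h', ObjectProperty.homMk f',
      isPushout_restrict (X := X) (Y := Y) (Z := Z) (P := ⟨P, hP⟩)
        (h' := ObjectProperty.homMk h') (f' := ObjectProperty.homMk f') hpo,
      ⟨Zc, ObjectProperty.homMk q, hfq⟩⟩
  · -- pullback_deflation
    intro X Y Z g h hg
    obtain ⟨A, a, ha⟩ := hg
    obtain ⟨W, h', g', hpb, hg'⟩ :=
      hS.pullback_deflation (toAmb g) (toAmb h) ⟨_, _, ha⟩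
    obtain ⟨B, b, hb⟩ := hg'
    have hmonolift : Mono (biprod.lift h' g' : W ⟶ X.obj ⊞ Y.obj) := by
      refine ⟨fun {U} α β hαβ => ?_⟩
      have h1 := hαβ =≫ biprod.fst
      have h2 := hαβ =≫ biprod.snd
      simp only [Category.assoc, biprod.lift_fst, biprod.lift_snd] at h1 h2
      exact hpb.hom_ext h1 h2
    have hW : W ∈ S.AT T :=
      AT_of_mono (biprod.lift h' g') hmonolift (AT_biprod X.property Y.property)
    have hB : B ∈ S.AT T := AT_of_mono b (mono_of_inflation hS ⟨_, _, hb⟩) hW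
    exact ⟨⟨W, hW⟩, ObjectProperty.homMk h', ObjectProperty.homMk g',
      isPullback_restrict (W := ⟨W, hW⟩) (X := X) (Y := Y) (Z := Z)
        (h' := ObjectProperty.homMk h') (g' := ObjectProperty.homMk g') hpb,
      ⟨⟨B, hB⟩, ObjectProperty.homMk b, hb⟩⟩

end StructOn
section Final

variable {C : Type u} [Category.{v} C] [Preadditive C] [HasZeroObject C]
  [HasFiniteBiproducts C] {S : ConflationStruct C} {T : Set C}

lemma PTset_mem (hS : S.IsExactStructure) (hP : S.HasEnoughProjectives) {K : C}
    (hK : K ∈ S.PTset T) : K ∈ S.AT T ∧ S.IsProjRel (S.AT T) K := by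
  obtain ⟨n, fj, hgen, i, r, hir⟩ := hK
  have hmemj : ∀ j, fj j ∈ S.AT T := fun j => by
    obtain ⟨Q, T0, d, ii, hQ, hd, hi, happ⟩ := hgen j
    exact AT_of_generator hS hQ hd hi happ
  have hmemS : (⨁ fj) ∈ S.AT T := AT_biproduct hmemj
  have hmemK : K ∈ S.AT T := AT_of_summand i r hir hmemS
  refine ⟨hmemK, hmemK, ?_⟩
  intro Y Z g hY hZ hdefl u
  obtain ⟨X₀, f₀, hX₀, hconf⟩ := hdefl
  have hgdefl : S.IsDeflation g := ⟨_, _, hconf⟩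
  have lift_j : ∀ j, ∃ v : fj j ⟶ Y, v ≫ g = biproduct.ι fj j ≫ (r ≫ u) := fun j => by
    obtain ⟨Q, T0, d, ii, hQ, hd, hi, happ⟩ := hgen j
    exact projRel_lift_of_generator hS hP hQ hd hi happ g hY hgdefl _
  have hwg : (∑ j, biproduct.π fj j ≫ (lift_j j).choose) ≫ g = r ≫ u := by
    rw [Preadditive.sum_comp]
    have he : ∀ j ∈ Finset.univ, (biproduct.π fj j ≫ (lift_j j).choose) ≫ g =
        biproduct.π fj j ≫ biproduct.ι fj j ≫ (r ≫ u) := fun j _ => by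
      rw [Category.assoc, (lift_j j).choose_spec]
    rw [Finset.sum_congr rfl he]
    simp only [← Category.assoc]
    rw [← Preadditive.sum_comp, ← Preadditive.sum_comp, biproduct.total, Category.id_comp]
  refine ⟨i ≫ ∑ j, biproduct.π fj j ≫ (lift_j j).choose, ?_⟩
  rw [Category.assoc, hwg, ← Category.assoc, hir, Category.id_comp]

lemma enough_PT (hS : S.IsExactStructure) (hP : S.HasEnoughProjectives)
    (hWIC : WeaklyIdempotentComplete C) (hA : S.CondA T) {X : C} (hX : X ∈ S.AT T) :
    ∃ (K Y : C) (i : Y ⟶ K) (p : K ⟶ X),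
      K ∈ S.PTset T ∧ Y ∈ S.AT T ∧ S.IsConflation i p := by
  have : HasBinaryBiproducts C := hasBinaryBiproducts_of_finite_biproducts C
  obtain ⟨Q, p, hQ, hp⟩ := hP X
  obtain ⟨T0, fap, happ, hadm⟩ := hA Q hQ
  obtain ⟨K, d, ii, hd, hi, hdi⟩ := hadm
  have happ' : LeftApprox T (d ≫ ii) := by rw [hdi]; exact happ
  have hKPT : K ∈ S.PTset T :=
    ⟨1, fun _ => K, fun j => ⟨Q, T0, d, ii, hQ, hd, hi, happ'⟩,
      biproduct.ι (fun _ : Fin 1 => K) 0, biproduct.π (fun _ : Fin 1 => K) 0,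
      biproduct.ι_π_self _ _⟩
  obtain ⟨L, k, hconf⟩ := hd
  have hkp : k ≫ p = 0 := AT_kernel_comp_zero hS hP hX hQ hconf happ' p
  obtain ⟨p'', hp''⟩ := coker_fac hS hconf p hkp
  have hp''defl : S.IsDeflation p'' :=
    deflation_cancel hS hWIC (f := d) (by rw [hp'']; exact hp)
  obtain ⟨Y, y, hy⟩ := hp''defl
  have hKAT : K ∈ S.AT T := AT_of_generator hS hQ ⟨_, _, hconf⟩ hi happ'
  have hYAT : Y ∈ S.AT T := AT_of_mono y (mono_of_inflation hS ⟨_, _, hy⟩) hKAT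
  exact ⟨K, Y, y, p'', hKPT, hYAT, hy⟩

end Final

/-- `E_T = (A_T, S_T)` is an exact category with enough projectives
given by `P_T`. -/
theorem ET_exact_with_enough_projectives
    {C : Type u} [Category.{v} C] [Preadditive C] [HasZeroObject C] [HasFiniteBiproducts C]
    [EssentiallySmall.{v} C]
    (S : ConflationStruct C) (hS : S.IsExactStructure) (hP : S.HasEnoughProjectives)
    (hWIC : WeaklyIdempotentComplete C)
    (T : Set C) (hA : S.CondA T) :
    (S.structOn (S.AT T)).IsExactStructure ∧
    (∀ K ∈ S.PTset T, K ∈ S.AT T ∧ S.IsProjRel (S.AT T) K) ∧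
    (∀ X ∈ S.AT T, ∃ (K Y : C) (i : Y ⟶ K) (p : K ⟶ X),
        K ∈ S.PTset T ∧ Y ∈ S.AT T ∧ S.IsConflation i p) := by
  have : HasBinaryBiproducts C := hasBinaryBiproducts_of_finite_biproducts C
  exact ⟨structOn_AT_isExact hS, fun _ hK => PTset_mem hS hP hK,
    fun _ hX => enough_PT hS hP hWIC hA hX⟩

end TauTilting
end

section
/- Let E be a skeletally small abelian category with enough projectives P and let T be a subcategory of E satisfying condition (A). Then the category A_T = {X ∈ E | Hom_E(f, X) = 0 for all f ∈ I} is an abelian category. -/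
open CategoryTheory CategoryTheory.Limits

universe v u

namespace TauTilting

section Aux

variable {E : Type u} [Category.{v} E] [Abelian E] [EnoughProjectives E] (T : Set E)

/-- The defining property of `A_T`. -/
abbrev ATprop (X : E) : Prop :=
  ∀ ⦃Q Q' : E⦄ (f : Q ⟶ Q'), Projective Q → Projective Q' →
    (∀ T' ∈ T, ∀ g : Q' ⟶ T', f ≫ g = 0) → ∀ h : Q' ⟶ X, f ≫ h = 0

/-- `A_T` is closed under subobjects. -/
theorem ATprop_of_mono {X Y : E} (i : Y ⟶ X) [Mono i] (hX : ATprop T X) : ATprop T Y := by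
  intro Q Q' f hQ hQ' hf h
  have : (f ≫ h) ≫ i = 0 ≫ i := by
    rw [Category.assoc, hX f hQ hQ' hf (h ≫ i), zero_comp]
  exact (cancel_mono i).1 this

/-- `A_T` is closed under quotients. -/
theorem ATprop_of_epi {X Y : E} (e : X ⟶ Y) [Epi e] (hX : ATprop T X) : ATprop T Y := by
  intro Q Q' f hQ hQ' hf h
  haveI := hQ'
  have : h = Projective.factorThru h e ≫ e := (Projective.factorThru_comp h e).symm
  rw [this, ← Category.assoc, hX f hQ hQ' hf (Projective.factorThru h e), zero_comp]

/-- `A_T` is closed under arbitrary limits. -/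
theorem ATprop_closedUnderLimitsOfShape (J : Type) [SmallCategory J] :
    ObjectProperty.IsClosedUnderLimitsOfShape (ATprop T) J := by
  refine ⟨fun X ⟨hX⟩ => ?_⟩
  obtain ⟨⟨F, π, hc⟩, hF⟩ := hX
  let c : Cone F := Cone.mk _ π
  intro Q Q' f hQ hQ' hf h
  apply hc.hom_ext
  intro j
  rw [Category.assoc, zero_comp, hF j f hQ hQ' hf (h ≫ c.π.app j)]

/-- `A_T` is closed under finite biproducts. -/
theorem ATprop_biproduct {J : Type} [Fintype J] (X : J → E) [HasBiproduct X]
    (hX : ∀ j, ATprop T (X j)) : ATprop T (⨁ X) := by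
  intro Q Q' f hQ hQ' hf h
  apply biproduct.hom_ext
  intro j
  rw [Category.assoc, zero_comp, hX j f hQ hQ' hf (h ≫ biproduct.π X j)]

/-- `A_T` is closed under finite colimits. -/
theorem ATprop_closedUnderColimitsOfShape (J : Type) [SmallCategory J] [FinCategory J] :
    ObjectProperty.IsClosedUnderColimitsOfShape (ATprop T) J := by
  refine ⟨fun X ⟨hX⟩ => ?_⟩
  obtain ⟨⟨F, ι, hc⟩, hF⟩ := hX
  let c : Cocone F := Cocone.mk _ ι
  haveI : Fintype J := FinCategory.fintypeObj
  haveI : HasFiniteBiproducts E := HasFiniteBiproducts.of_hasFiniteProducts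
  let e : (⨁ F.obj) ⟶ c.pt := biproduct.desc fun j => c.ι.app j
  haveI : Epi e := by
    constructor
    intro Z a b hab
    apply hc.hom_ext
    intro j
    have := biproduct.ι_desc_assoc (fun j => c.ι.app j) j a
    calc c.ι.app j ≫ a = biproduct.ι F.obj j ≫ e ≫ a := by simp [e]
      _ = biproduct.ι F.obj j ≫ e ≫ b := by rw [hab]
      _ = c.ι.app j ≫ b := by simp [e]
  exact ATprop_of_epi T e (ATprop_biproduct T F.obj hF)

end Aux

/-- for a skeletally small abelian category `E` with enough projectives
and a subcategory `T` satisfying condition (A), the full subcategory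
`A_T = {X | Hom(f, X) = 0 for all f ∈ I}` (where `I` is the ideal of morphisms `f`
between projectives with `Hom(f, T) = 0`) is an abelian category. -/
theorem AT_abelian
    {E : Type u} [Category.{v} E] [Abelian E] [EnoughProjectives E] [EssentiallySmall.{v} E]
    (T : Set E)
    (hA : ∀ P : E, Projective P → ∃ (T' : E) (f : P ⟶ T'), T' ∈ T ∧
      ∀ T'' ∈ T, ∀ u : P ⟶ T'', ∃ v : T' ⟶ T'', f ≫ v = u) :
    Nonempty (Abelian (ObjectProperty.FullSubcategory (fun X : E =>
      ∀ ⦃Q Q' : E⦄ (f : Q ⟶ Q'), Projective Q → Projective Q' →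
        (∀ T' ∈ T, ∀ g : Q' ⟶ T', f ≫ g = 0) → ∀ h : Q' ⟶ X, f ≫ h = 0))) := by
  show Nonempty (Abelian (ObjectProperty.FullSubcategory (ATprop T)))
  haveI : HasFiniteLimits (ObjectProperty.FullSubcategory (ATprop T)) :=
    ⟨fun J _ _ => have := ATprop_closedUnderLimitsOfShape T J
      hasLimitsOfShape_of_closedUnderLimits J (ATprop T)⟩
  haveI : HasFiniteColimits (ObjectProperty.FullSubcategory (ATprop T)) :=
    ⟨fun J _ _ => have := ATprop_closedUnderColimitsOfShape T J
      hasColimitsOfShape_of_closedUnderColimits J (ATprop T)⟩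
  haveI : IsNormalMonoCategory (ObjectProperty.FullSubcategory (ATprop T)) := by
    constructor
    intro X Y f hf
    let f' : X.obj ⟶ Y.obj := f.hom
    -- `f'` is a monomorphism in `E`
    haveI : Mono f' := by
      apply Abelian.mono_of_kernel_ι_eq_zero
      have hK : ATprop T (kernel f') := ATprop_of_mono T (kernel.ι f') X.property
      have h0 : (show (⟨kernel f', hK⟩ : ObjectProperty.FullSubcategory (ATprop T)) ⟶ X from ObjectProperty.homMk (kernel.ι f')) ≫ f
          = (0 : (⟨kernel f', hK⟩ : ObjectProperty.FullSubcategory (ATprop T)) ⟶ X) ≫ f := by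
        ext
        show kernel.ι f' ≫ f' = 0 ≫ f'
        simp [f']
      exact congrArg InducedCategory.Hom.hom ((cancel_mono f).1 h0)
    have hZ : ATprop T (cokernel f') := ATprop_of_epi T (cokernel.π f') Y.property
    refine ⟨⟨⟨cokernel f', hZ⟩, ObjectProperty.homMk (cokernel.π f'),
      by ext; exact cokernel.condition f', ?_⟩⟩
    have key : ∀ {W : ObjectProperty.FullSubcategory (ATprop T)} (g' : W ⟶ Y)
        (hg' : g' ≫ (ObjectProperty.homMk (cokernel.π f') :
          Y ⟶ (⟨cokernel f', hZ⟩ : ObjectProperty.FullSubcategory (ATprop T))) = 0), g'.hom ≫ cokernel.π f' = 0 :=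
      fun g' hg' => congrArg InducedCategory.Hom.hom hg'
    refine KernelFork.IsLimit.ofι _ _
      (fun {W} g' hg' => ObjectProperty.homMk (Abelian.monoLift f' g'.hom (key g' hg')))
      (fun {W} g' hg' => by ext; exact Abelian.monoLift_comp f' g'.hom (key g' hg'))
      (fun {W} g' hg' m hm => ?_)
    have : m.hom ≫ f' =
        Abelian.monoLift f' g'.hom (key g' hg') ≫ f' := by
      rw [Abelian.monoLift_comp]
      exact congrArg InducedCategory.Hom.hom hm
    exact ObjectProperty.hom_ext _ ((cancel_mono f').1 this)
  haveI : IsNormalEpiCategory (ObjectProperty.FullSubcategory (ATprop T)) := by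
    constructor
    intro X Y f hf
    let f' : X.obj ⟶ Y.obj := f.hom
    -- `f'` is an epimorphism in `E`
    haveI : Epi f' := by
      apply Abelian.epi_of_cokernel_π_eq_zero
      have hC : ATprop T (cokernel f') := ATprop_of_epi T (cokernel.π f') Y.property
      have h0 : f ≫ (show Y ⟶ (⟨cokernel f', hC⟩ : ObjectProperty.FullSubcategory (ATprop T)) from
          ObjectProperty.homMk (cokernel.π f')) = f ≫ (0 : Y ⟶ (⟨cokernel f', hC⟩ : ObjectProperty.FullSubcategory (ATprop T))) := by
        ext
        show f' ≫ cokernel.π f' = f' ≫ 0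
        simp [f']
      exact congrArg InducedCategory.Hom.hom ((cancel_epi f).1 h0)
    have hW : ATprop T (kernel f') := ATprop_of_mono T (kernel.ι f') X.property
    refine ⟨⟨⟨kernel f', hW⟩, ObjectProperty.homMk (kernel.ι f'),
      by ext; exact kernel.condition f', ?_⟩⟩
    have key : ∀ {Z : ObjectProperty.FullSubcategory (ATprop T)} (g' : X ⟶ Z)
        (hg' : (ObjectProperty.homMk (kernel.ι f') :
          (⟨kernel f', hW⟩ : ObjectProperty.FullSubcategory (ATprop T)) ⟶ X) ≫ g' = 0), kernel.ι f' ≫ g'.hom = 0 :=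
      fun g' hg' => congrArg InducedCategory.Hom.hom hg'
    refine CokernelCofork.IsColimit.ofπ _ _
      (fun {Z} g' hg' => ObjectProperty.homMk (Abelian.epiDesc f' g'.hom (key g' hg')))
      (fun {Z} g' hg' => by ext; exact Abelian.comp_epiDesc f' g'.hom (key g' hg'))
      (fun {Z} g' hg' m hm => ?_)
    have : f' ≫ m.hom =
        f' ≫ Abelian.epiDesc f' g'.hom (key g' hg') := by
      rw [Abelian.comp_epiDesc]
      exact congrArg InducedCategory.Hom.hom hm
    exact ObjectProperty.hom_ext _ ((cancel_epi f').1 this)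
  exact ⟨{ toIsNormalMonoCategory := inferInstance, toIsNormalEpiCategory := inferInstance }⟩

end TauTilting
end
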